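/- arXiv:1003.5349 — 5 statements merged into one kernel-verified Lean document; each statement's English description precedes it below -/
import Mathlib

section
/- In the Orthogonal Greedy Algorithm with an M-coherent dictionary, mM ≤ 1/20, and 1 ≤ n ≤ 2m−1, the quantities d_n = ⟨f_{n−1}, g_n⟩ satisfy |d_{n+1}| ≤ |d_n|(1 + 1.25M). -/
open RealInnerProductSpace

/-- In OGA with an `M`-coherent dictionary, `mM ≤ 1/20` and `1 ≤ n ≤ 2m - 1`,
one has `|d_{n+1}| ≤ |d_n| (1 + 1.25 M)` where `d_k = ⟨f_{k-1}, g_k⟩`. -/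
theorem oga_dn_succ_bound {H : Type*} [NormedAddCommGroup H] [InnerProductSpace ℝ H]
    [CompleteSpace H]
    (D : Set H) (M : ℝ) (m : ℕ)
    (hDnorm : ∀ φ ∈ D, ‖φ‖ = 1)
    (hcoh : ∀ φ ∈ D, ∀ ψ ∈ D, φ ≠ ψ → |⟪φ, ψ⟫| ≤ M)
    (hm : 1 ≤ m) (hmM : (m : ℝ) * M ≤ 1 / 20)
    (n : ℕ) (hn : 1 ≤ n) (hn2m : n + 1 ≤ 2 * m)
    (fres : ℕ → H) (g : ℕ → H)
    (hgD : ∀ k, 1 ≤ k → k ≤ n + 1 → g k ∈ D)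
    (hgdist : ∀ i j, 1 ≤ i → i ≤ n + 1 → 1 ≤ j → j ≤ n + 1 → g i = g j → i = j)
    (hgreedy : ∀ k, k < n + 1 → ∀ φ ∈ D, |⟪fres k, φ⟫| ≤ |⟪fres k, g (k + 1)⟫|)
    (hres_span : ∀ k, k ≤ n + 1 → fres 0 - fres k ∈ Submodule.span ℝ (g '' Set.Icc 1 k))
    (hres_orth : ∀ k, k ≤ n + 1 → ∀ i, 1 ≤ i → i ≤ k → ⟪fres k, g i⟫ = 0) :
    |⟪fres n, g (n + 1)⟫| ≤ |⟪fres (n - 1), g n⟫| * (1 + 1.25 * M) := by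
  classical
  set dn := ⟪fres (n - 1), g n⟫ with hdn
  -- M is nonnegative
  have hM0 : 0 ≤ M := by
    refine le_trans (abs_nonneg _)
      (hcoh (g 1) (hgD 1 le_rfl (by omega)) (g 2) (hgD 2 (by omega) (by omega)) ?_)
    intro h
    have := hgdist 1 2 le_rfl (by omega) (by omega) (by omega) h
    omega
  -- the difference of residuals lies in the span of g_1, …, g_n
  have hspan : fres (n - 1) - fres n ∈ Submodule.span ℝ (g '' Set.Icc 1 n) := by
    have h1 := hres_span n (by omega)
    have h2 : fres 0 - fres (n - 1) ∈ Submodule.span ℝ (g '' Set.Icc 1 n) :=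
      Submodule.span_mono (Set.image_mono (Set.Icc_subset_Icc_right (by omega)))
        (hres_span (n - 1) (by omega))
    have heq : fres (n - 1) - fres n = (fres 0 - fres n) - (fres 0 - fres (n - 1)) := by abel
    rw [heq]; exact Submodule.sub_mem _ h1 h2
  have himg : g '' Set.Icc 1 n = ↑(Finset.image g (Finset.Icc 1 n)) := by
    simp [Finset.coe_image]
  rw [himg] at hspan
  obtain ⟨cf, -, hcf⟩ := Submodule.mem_span_finset.1 hspan
  set c : ℕ → ℝ := fun i => cf (g i) with hc
  have hginj : ∀ i ∈ Finset.Icc 1 n, ∀ j ∈ Finset.Icc 1 n, g i = g j → i = j := by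
    intro i hi j hj hij
    simp only [Finset.mem_Icc] at hi hj
    exact hgdist i j hi.1 (by omega) hj.1 (by omega) hij
  have hsum : ∑ i ∈ Finset.Icc 1 n, c i • g i = fres (n - 1) - fres n := by
    rw [← hcf, Finset.sum_image hginj]
  have hinner : ∀ φ : H, ⟪fres (n - 1) - fres n, φ⟫ = ∑ i ∈ Finset.Icc 1 n, c i * ⟪g i, φ⟫ := by
    intro φ
    rw [← hsum, sum_inner]
    simp [real_inner_smul_left]
  -- the "right hand side" values e_j
  have he : ∀ j ∈ Finset.Icc 1 n, ⟪fres (n - 1) - fres n, g j⟫ = if j = n then dn else 0 := by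
    intro j hj
    simp only [Finset.mem_Icc] at hj
    rw [inner_sub_left, hres_orth n (by omega) j hj.1 hj.2, sub_zero]
    by_cases hjn : j = n
    · simp [hjn, hdn]
    · rw [if_neg hjn]
      exact hres_orth (n - 1) (by omega) j hj.1 (by omega)
  -- key coefficient equation
  have hkey : ∀ j ∈ Finset.Icc 1 n,
      c j = (if j = n then dn else 0) - ∑ i ∈ (Finset.Icc 1 n).erase j, c i * ⟪g i, g j⟫ := by
    intro j hj
    have h1 := (he j hj).symm.trans (hinner (g j))
    rw [← Finset.add_sum_erase _ _ hj] at h1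
    have hgj : ⟪g j, g j⟫ = 1 := by
      have hjD : g j ∈ D := by
        simp only [Finset.mem_Icc] at hj
        exact hgD j hj.1 (by omega)
      rw [real_inner_self_eq_norm_sq, hDnorm _ hjD]; norm_num
    rw [hgj, mul_one] at h1
    linarith
  -- bound on inner products |⟪g i, g j⟫| ≤ M for distinct indices in range
  have hgM : ∀ i ∈ Finset.Icc 1 n, ∀ j, 1 ≤ j → j ≤ n + 1 → i ≠ j → |⟪g i, g j⟫| ≤ M := by
    intro i hi j hj1 hj2 hij
    simp only [Finset.mem_Icc] at hi
    refine hcoh _ (hgD i hi.1 (by omega)) _ (hgD j hj1 hj2) ?_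
    intro h
    exact hij (hgdist i j hi.1 (by omega) hj1 hj2 h)
  set S := ∑ j ∈ Finset.Icc 1 n, |c j| with hS
  have hS0 : 0 ≤ S := Finset.sum_nonneg fun _ _ => abs_nonneg _
  -- each |c j| ≤ |e j| + M * S
  have hcj : ∀ j ∈ Finset.Icc 1 n, |c j| ≤ |if j = n then dn else 0| + M * S := by
    intro j hj
    rw [hkey j hj]
    refine le_trans (abs_sub _ _) (add_le_add_right ?_ _)
    refine le_trans (Finset.abs_sum_le_sum_abs _ _) ?_
    have h1 : ∀ i ∈ (Finset.Icc 1 n).erase j, |c i * ⟪g i, g j⟫| ≤ M * |c i| := by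
      intro i hi
      have hi' := Finset.mem_of_mem_erase hi
      have hij : i ≠ j := Finset.ne_of_mem_erase hi
      rw [abs_mul, mul_comm]
      simp only [Finset.mem_Icc] at hj
      exact mul_le_mul_of_nonneg_right
        (hgM i hi' j hj.1 (by omega) hij) (abs_nonneg _)
    refine le_trans (Finset.sum_le_sum h1) ?_
    rw [← Finset.mul_sum]
    refine mul_le_mul_of_nonneg_left ?_ hM0
    exact Finset.sum_le_sum_of_subset_of_nonneg (Finset.erase_subset _ _)
      (fun _ _ _ => abs_nonneg _)
  -- summing: S ≤ |dn| + n * M * S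
  have hSsum : S ≤ |dn| + n * (M * S) := by
    have := Finset.sum_le_sum hcj
    rw [← hS, Finset.sum_add_distrib, Finset.sum_const, Nat.card_Icc] at this
    have hsum_e : ∑ j ∈ Finset.Icc 1 n, |if j = n then dn else 0| = |dn| := by
      rw [Finset.sum_eq_single n]
      · simp
      · intro j _ hjn; simp [hjn]
      · intro h; exact absurd (Finset.mem_Icc.2 ⟨hn, le_rfl⟩) h
    rw [hsum_e] at this
    simpa using this
  -- n * M ≤ 1/10
  have hnM : (n : ℝ) * M ≤ 1 / 10 := by
    have h1 : (n : ℝ) ≤ 2 * m := by exact_mod_cast le_trans (Nat.le_succ n) hn2m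
    calc (n : ℝ) * M ≤ 2 * m * M := mul_le_mul_of_nonneg_right h1 hM0
      _ = 2 * (m * M) := by ring
      _ ≤ 2 * (1 / 20) := by linarith
      _ = 1 / 10 := by norm_num
  -- hence S ≤ (10/9) |dn|
  have hSbound : S ≤ (10 / 9) * |dn| := by nlinarith [abs_nonneg dn]
  -- final estimate
  have hsplit : ⟪fres n, g (n + 1)⟫
      = ⟪fres (n - 1), g (n + 1)⟫ - ∑ i ∈ Finset.Icc 1 n, c i * ⟪g i, g (n + 1)⟫ := by
    rw [← hinner (g (n + 1)), inner_sub_left]; ring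
  have hgreed : |⟪fres (n - 1), g (n + 1)⟫| ≤ |dn| := by
    have h := hgreedy (n - 1) (by omega) (g (n + 1)) (hgD (n + 1) (by omega) le_rfl)
    have hn1 : n - 1 + 1 = n := by omega
    rwa [hn1] at h
  have hsum_bound : |∑ i ∈ Finset.Icc 1 n, c i * ⟪g i, g (n + 1)⟫| ≤ M * S := by
    refine le_trans (Finset.abs_sum_le_sum_abs _ _) ?_
    rw [hS, Finset.mul_sum]
    refine Finset.sum_le_sum fun i hi => ?_
    rw [abs_mul, mul_comm]
    simp only [Finset.mem_Icc] at hi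
    exact mul_le_mul_of_nonneg_right
      (hgM i (Finset.mem_Icc.2 hi) (n + 1) (by omega) le_rfl (by omega)) (abs_nonneg _)
  calc |⟪fres n, g (n + 1)⟫|
      ≤ |⟪fres (n - 1), g (n + 1)⟫| + |∑ i ∈ Finset.Icc 1 n, c i * ⟪g i, g (n + 1)⟫| := by
        rw [hsplit]; exact abs_sub _ _
    _ ≤ |dn| + M * S := add_le_add hgreed hsum_bound
    _ ≤ |dn| * (1 + 1.25 * M) := by nlinarith [abs_nonneg dn]
end

section
/- In the Orthogonal Greedy Algorithm with an M-coherent dictionary and mM ≤ 1/20, for any 1 ≤ l ≤ n ≤ 2m one has |d_n| ≤ |d_l| · exp(2.5mM), where d_k = ⟨f_{k−1}, g_k⟩. -/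
open RealInnerProductSpace

set_option maxHeartbeats 1000000 in
/-- In OGA with an `M`-coherent dictionary and `mM ≤ 1/20`, for `1 ≤ l ≤ n ≤ 2m` one has
`|d_n| ≤ |d_l| exp(2.5 mM)` where `d_k = ⟨f_{k-1}, g_k⟩`. -/
theorem oga_dn_exp_bound {H : Type*} [NormedAddCommGroup H] [InnerProductSpace ℝ H]
    [CompleteSpace H]
    (D : Set H) (M : ℝ) (m : ℕ)
    (hDnorm : ∀ φ ∈ D, ‖φ‖ = 1)
    (hcoh : ∀ φ ∈ D, ∀ ψ ∈ D, φ ≠ ψ → |⟪φ, ψ⟫| ≤ M)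
    (hm : 1 ≤ m) (hmM : (m : ℝ) * M ≤ 1 / 20)
    (l n : ℕ) (hl : 1 ≤ l) (hln : l ≤ n) (hn2m : n ≤ 2 * m)
    (fres : ℕ → H) (g : ℕ → H)
    (hgD : ∀ k, 1 ≤ k → k ≤ 2 * m → g k ∈ D)
    (hgdist : ∀ i j, 1 ≤ i → i ≤ 2 * m → 1 ≤ j → j ≤ 2 * m → g i = g j → i = j)
    (hgreedy : ∀ k, k < 2 * m → ∀ φ ∈ D, |⟪fres k, φ⟫| ≤ |⟪fres k, g (k + 1)⟫|)
    (hres_span : ∀ k, k ≤ 2 * m → fres 0 - fres k ∈ Submodule.span ℝ (g '' Set.Icc 1 k))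
    (hres_orth : ∀ k, k ≤ 2 * m → ∀ i, 1 ≤ i → i ≤ k → ⟪fres k, g i⟫ = 0) :
    |⟪fres (n - 1), g n⟫| ≤ |⟪fres (l - 1), g l⟫| * Real.exp (2.5 * m * M) := by
  classical
  have hM0 : 0 ≤ M := by
    have h12 : g 1 ≠ g 2 := by
      intro h
      have := hgdist 1 2 (by omega) (by omega) (by omega) (by omega) h
      omega
    exact (abs_nonneg _).trans
      (hcoh _ (hgD 1 (by omega) (by omega)) _ (hgD 2 (by omega) (by omega)) h12)
  have hnorm : ∀ i, 1 ≤ i → i ≤ 2 * m → ⟪g i, g i⟫ = (1 : ℝ) := by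
    intro i h1 h2
    rw [real_inner_self_eq_norm_sq, hDnorm (g i) (hgD i h1 h2)]
    norm_num
  -- greedy bound at step l
  have hA : ∀ φ ∈ D, |⟪fres (l - 1), φ⟫| ≤ |⟪fres (l - 1), g l⟫| := by
    intro φ hφ
    have h := hgreedy (l - 1) (by omega) φ hφ
    have hl1 : l - 1 + 1 = l := by omega
    rwa [hl1] at h
  set A : ℝ := |⟪fres (l - 1), g l⟫| with hAdef
  have hA0 : 0 ≤ A := abs_nonneg _
  set s : Finset ℕ := Finset.Icc 1 (n - 1) with hsdef
  have hcards : s.card = n - 1 := by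
    rw [hsdef, Nat.card_Icc]; omega
  -- p := fres (l-1) - fres (n-1) lies in span of g over [1, n-1]
  have hp : fres (l - 1) - fres (n - 1) ∈ Submodule.span ℝ (g '' Set.Icc 1 (n - 1)) := by
    have h1 := hres_span (n - 1) (by omega)
    have h2 := hres_span (l - 1) (by omega)
    have hsub : g '' Set.Icc 1 (l - 1) ⊆ g '' Set.Icc 1 (n - 1) :=
      Set.image_mono (Set.Icc_subset_Icc le_rfl (by omega))
    have h2' := Submodule.span_mono hsub h2
    have heq : fres (l - 1) - fres (n - 1)
        = (fres 0 - fres (n - 1)) - (fres 0 - fres (l - 1)) := by abel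
    rw [heq]
    exact sub_mem h1 h2'
  -- extract coefficients
  have hp' : fres (l - 1) - fres (n - 1) ∈ Submodule.span ℝ (↑(s.image g) : Set H) := by
    rwa [Finset.coe_image, hsdef, Finset.coe_Icc]
  obtain ⟨fc, -, hfc⟩ := Submodule.mem_span_finset.mp hp'
  set c : ℕ → ℝ := fun i => fc (g i) with hcdef
  have hinj : ∀ i ∈ s, ∀ j ∈ s, g i = g j → i = j := by
    intro i hi j hj h
    rw [hsdef, Finset.mem_Icc] at hi hj
    exact hgdist i j hi.1 (by omega) hj.1 (by omega) h
  have hrep : fres (l - 1) - fres (n - 1) = ∑ i ∈ s, c i • g i := by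
    rw [← hfc, Finset.sum_image hinj]
  set S : ℝ := ∑ i ∈ s, |c i| with hSdef
  have hS0 : 0 ≤ S := Finset.sum_nonneg fun i _ => abs_nonneg _
  -- coherence for distinct indices
  have hcohij : ∀ i j, 1 ≤ i → i ≤ 2 * m → 1 ≤ j → j ≤ 2 * m → i ≠ j → |⟪g i, g j⟫| ≤ M := by
    intro i j h1 h2 h3 h4 hne
    refine hcoh _ (hgD i h1 h2) _ (hgD j h3 h4) ?_
    intro h
    exact hne (hgdist i j h1 h2 h3 h4 h)
  -- inner products of p with g j
  have hip : ∀ j ∈ s, ⟪fres (l - 1) - fres (n - 1), g j⟫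
      = c j + ∑ i ∈ s.erase j, c i * ⟪g i, g j⟫ := by
    intro j hj
    obtain ⟨hj1, hj2⟩ := Finset.mem_Icc.mp hj
    rw [hrep, sum_inner]
    simp_rw [real_inner_smul_left]
    rw [← Finset.add_sum_erase _ _ hj, hnorm j hj1 (by omega), mul_one]
  -- bound on |⟨p, g j⟩|
  have hpj : ∀ j ∈ s, |⟪fres (l - 1) - fres (n - 1), g j⟫| ≤ A := by
    intro j hj
    obtain ⟨hj1, hj2⟩ := Finset.mem_Icc.mp hj
    have horthn : ⟪fres (n - 1), g j⟫ = 0 := hres_orth (n - 1) (by omega) j hj1 hj2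
    rw [inner_sub_left, horthn, sub_zero]
    exact hA (g j) (hgD j hj1 (by omega))
  -- bound each coefficient
  have hcj : ∀ j ∈ s, |c j| ≤ A + M * (S - |c j|) := by
    intro j hj
    obtain ⟨hj1, hj2⟩ := Finset.mem_Icc.mp hj
    have h1 := hip j hj
    have hcje : c j = ⟪fres (l - 1) - fres (n - 1), g j⟫
        - ∑ i ∈ s.erase j, c i * ⟪g i, g j⟫ := by linarith
    have hsum : |∑ i ∈ s.erase j, c i * ⟪g i, g j⟫| ≤ M * (S - |c j|) := by
      calc |∑ i ∈ s.erase j, c i * ⟪g i, g j⟫| ≤ ∑ i ∈ s.erase j, |c i * ⟪g i, g j⟫| :=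
            Finset.abs_sum_le_sum_abs _ _
        _ ≤ ∑ i ∈ s.erase j, |c i| * M := by
            refine Finset.sum_le_sum fun i hi => ?_
            obtain ⟨hne, hi'⟩ := Finset.mem_erase.mp hi
            obtain ⟨hi1, hi2⟩ := Finset.mem_Icc.mp hi'
            rw [abs_mul]
            exact mul_le_mul_of_nonneg_left
              (hcohij i j hi1 (by omega) hj1 (by omega) hne) (abs_nonneg _)
        _ = M * (S - |c j|) := by
            rw [← Finset.sum_mul, Finset.sum_erase_eq_sub hj, ← hSdef, mul_comm]
    calc |c j| ≤ |⟪fres (l - 1) - fres (n - 1), g j⟫|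
          + |∑ i ∈ s.erase j, c i * ⟪g i, g j⟫| := by
          rw [hcje]; exact abs_sub _ _
      _ ≤ A + M * (S - |c j|) := add_le_add (hpj j hj) hsum
  -- sum the bounds: S ≤ (n-1) A + M ((n-1) S - S)
  have hSsum : S ≤ (n - 1 : ℕ) * A + M * ((n - 1 : ℕ) * S - S) := by
    have h := Finset.sum_le_sum hcj
    rw [← hSdef] at h
    have hrhs : ∑ j ∈ s, (A + M * (S - |c j|)) = (n - 1 : ℕ) * A + M * ((n - 1 : ℕ) * S - S) := by
      rw [Finset.sum_add_distrib, Finset.sum_const, hcards, ← Finset.mul_sum]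
      have : ∑ j ∈ s, (S - |c j|) = (n - 1 : ℕ) * S - S := by
        rw [Finset.sum_sub_distrib, Finset.sum_const, hcards, ← hSdef, nsmul_eq_mul]
      rw [this, nsmul_eq_mul]
    linarith [h.trans_eq hrhs]
  -- deduce S ≤ (10/9) * (n-1) * A
  have hn1M : ((n : ℝ) - 1) * M ≤ 1 / 10 := by
    have h1 : ((n : ℝ) - 1) * M ≤ (2 * m : ℝ) * M := by
      have : (n : ℝ) - 1 ≤ (2 * m : ℝ) := by
        have : (n : ℝ) ≤ 2 * m := by exact_mod_cast hn2m
        linarith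
      exact mul_le_mul_of_nonneg_right this hM0
    have h2 : (2 * (m : ℝ)) * M ≤ 1 / 10 := by nlinarith
    push_cast at h1 ⊢
    linarith
  have hcast : ((n - 1 : ℕ) : ℝ) = (n : ℝ) - 1 := by
    have : 1 ≤ n := by omega
    push_cast [this]; ring
  have hSle : S ≤ (10 / 9) * ((n : ℝ) - 1) * A := by
    rw [hcast] at hSsum
    nlinarith [mul_nonneg hM0 hS0]
  -- final estimate
  have horthn2 : ∀ i ∈ s, ⟪g i, g n⟫ = ⟪g i, g n⟫ := fun _ _ => rfl
  have hdn : ⟪fres (n - 1), g n⟫ = ⟪fres (l - 1), g n⟫ - ∑ i ∈ s, c i * ⟪g i, g n⟫ := by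
    have h1 : ⟪fres (l - 1) - fres (n - 1), g n⟫ = ∑ i ∈ s, c i * ⟪g i, g n⟫ := by
      rw [hrep, sum_inner]
      simp_rw [real_inner_smul_left]
    rw [inner_sub_left] at h1
    linarith
  have hsumn : |∑ i ∈ s, c i * ⟪g i, g n⟫| ≤ M * S := by
    calc |∑ i ∈ s, c i * ⟪g i, g n⟫| ≤ ∑ i ∈ s, |c i * ⟪g i, g n⟫| :=
          Finset.abs_sum_le_sum_abs _ _
      _ ≤ ∑ i ∈ s, |c i| * M := by
          refine Finset.sum_le_sum fun i hi => ?_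
          obtain ⟨hi1, hi2⟩ := Finset.mem_Icc.mp hi
          rw [abs_mul]
          exact mul_le_mul_of_nonneg_left
            (hcohij i n hi1 (by omega) (by omega) hn2m (by omega)) (abs_nonneg _)
      _ = M * S := by rw [← Finset.sum_mul, ← hSdef, mul_comm]
  have hgn : |⟪fres (l - 1), g n⟫| ≤ A := hA (g n) (hgD n (by omega) hn2m)
  have hbound : |⟪fres (n - 1), g n⟫| ≤ A + M * S := by
    rw [hdn]
    exact (abs_sub _ _).trans (add_le_add hgn hsumn)
  -- M * S ≤ (20/9) m M A  and  1 + (20/9) m M ≤ exp (2.5 m M)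
  have hMS : M * S ≤ (20 / 9) * ((m : ℝ) * M) * A := by
    have h1 : M * S ≤ M * ((10 / 9) * ((n : ℝ) - 1) * A) := mul_le_mul_of_nonneg_left hSle hM0
    have h2 : M * ((10 / 9) * ((n : ℝ) - 1) * A) ≤ (20 / 9) * ((m : ℝ) * M) * A := by
      have hn' : (n : ℝ) - 1 ≤ 2 * (m : ℝ) := by
        have : (n : ℝ) ≤ 2 * m := by exact_mod_cast hn2m
        linarith
      nlinarith [mul_nonneg hM0 hA0]
    linarith
  have hexp : 1 + (20 / 9) * ((m : ℝ) * M) ≤ Real.exp (2.5 * m * M) := by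
    have h1 := Real.add_one_le_exp (2.5 * (m : ℝ) * M)
    have hmM0 : 0 ≤ (m : ℝ) * M := mul_nonneg (Nat.cast_nonneg m) hM0
    nlinarith
  calc |⟪fres (n - 1), g n⟫| ≤ A + M * S := hbound
    _ ≤ A * (1 + (20 / 9) * ((m : ℝ) * M)) := by nlinarith
    _ ≤ A * Real.exp (2.5 * m * M) := mul_le_mul_of_nonneg_left hexp hA0
end

section
/- Let D be an M-coherent dictionary, ψ_1,…,ψ_m distinct elements of D, L = span(ψ_1,…,ψ_m), and g, g' ∈ D with g, g' ∉ {ψ_1,…,ψ_m} and g ≠ g'. If mM ≤ 1/20, then |⟨P_L^⊥(g), g'⟩| ≤ 1.1 M, where P_L^⊥ denotes orthogonal projection onto the orthogonal complement of L. -/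
open RealInnerProductSpace

/-- For distinct `ψ₁,…,ψₘ` from an `M`-coherent dictionary with `mM ≤ 1/20`,
`L = span(ψ₁,…,ψₘ)`, and distinct `g, g' ∈ D` not among the `ψⱼ`,
`|⟨P_L^⊥ g, g'⟩| ≤ 1.1 M` (here `P_L^⊥ g = g - P_L g`). -/
theorem inner_proj_orthogonal_le {H : Type*} [NormedAddCommGroup H]
    [InnerProductSpace ℝ H] [CompleteSpace H]
    (D : Set H) (M : ℝ) (m : ℕ)
    (hDnorm : ∀ φ ∈ D, ‖φ‖ = 1)
    (hcoh : ∀ φ ∈ D, ∀ ψ ∈ D, φ ≠ ψ → |⟪φ, ψ⟫| ≤ M)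
    (hm : 1 ≤ m) (hmM : (m : ℝ) * M ≤ 1 / 20)
    (ψ : Fin m → H) (hψD : ∀ j, ψ j ∈ D) (hψinj : Function.Injective ψ)
    (g g' : H) (hgD : g ∈ D) (hg'D : g' ∈ D) (hgg' : g ≠ g')
    (hg : g ∉ Set.range ψ) (hg' : g' ∉ Set.range ψ) :
    letI : FiniteDimensional ℝ (Submodule.span ℝ (Set.range ψ)) :=
      FiniteDimensional.span_of_finite ℝ (Set.finite_range ψ)
    |⟪g - (Submodule.orthogonalProjectionOnto (Submodule.span ℝ (Set.range ψ)) g : H), g'⟫| ≤ 1.1 * M := by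
  letI : FiniteDimensional ℝ (Submodule.span ℝ (Set.range ψ)) := FiniteDimensional.span_of_finite ℝ (Set.finite_range ψ)
  set L := Submodule.span ℝ (Set.range ψ) with hL
  set p : H := (Submodule.orthogonalProjectionOnto L g : H) with hp
  have hM0 : 0 ≤ M := le_trans (abs_nonneg _) (hcoh g hgD g' hg'D hgg')
  have hpL : p ∈ L := (Submodule.orthogonalProjectionOnto L g).2
  obtain ⟨c, hc⟩ := (Submodule.mem_span_range_iff_exists_fun ℝ).1 hpL
  -- inner products with g' and ψ k
  have hgψ : ∀ k, g ≠ ψ k := fun k h => hg ⟨k, h.symm⟩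
  have hg'ψ : ∀ k, g' ≠ ψ k := fun k h => hg' ⟨k, h.symm⟩
  have hψψ : ∀ j k, j ≠ k → |⟪ψ j, ψ k⟫| ≤ M := fun j k h =>
    hcoh _ (hψD j) _ (hψD k) (fun e => h (hψinj e))
  have hψself : ∀ k, ⟪ψ k, ψ k⟫ = 1 := fun k => by
    rw [real_inner_self_eq_norm_sq, hDnorm _ (hψD k)]; norm_num
  -- normal equations
  have hnorm : ∀ k, ⟪p, ψ k⟫ = ⟪g, ψ k⟫ := by
    intro k
    have h0 : ⟪g - p, ψ k⟫ = 0 :=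
      by have := L.starProjection_inner_eq_zero g (ψ k)
           (Submodule.subset_span ⟨k, rfl⟩)
         rw [Submodule.starProjection_apply] at this; exact this
    rw [inner_sub_left] at h0
    linarith
  have hpinner : ∀ v : H, ⟪p, v⟫ = ∑ j, c j * ⟪ψ j, v⟫ := by
    intro v
    rw [← hc, sum_inner]
    simp [real_inner_smul_left]
  set S := ∑ j, |c j| with hS
  have hS0 : 0 ≤ S := Finset.sum_nonneg fun j _ => abs_nonneg _
  -- bound each coefficient
  have hck : ∀ k, |c k| ≤ M + M * S := by
    intro k
    have h1 : ⟪p, ψ k⟫ = c k + ∑ j ∈ Finset.univ.erase k, c j * ⟪ψ j, ψ k⟫ := by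
      rw [hpinner (ψ k), ← Finset.add_sum_erase _ _ (Finset.mem_univ k), hψself k,
        mul_one]
    have h2 : c k = ⟪g, ψ k⟫ - ∑ j ∈ Finset.univ.erase k, c j * ⟪ψ j, ψ k⟫ := by
      have := hnorm k; rw [h1] at this; linarith
    have h3 : |∑ j ∈ Finset.univ.erase k, c j * ⟪ψ j, ψ k⟫| ≤ M * S := by
      calc |∑ j ∈ Finset.univ.erase k, c j * ⟪ψ j, ψ k⟫|
          ≤ ∑ j ∈ Finset.univ.erase k, |c j * ⟪ψ j, ψ k⟫| :=
            Finset.abs_sum_le_sum_abs _ _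
        _ ≤ ∑ j ∈ Finset.univ.erase k, |c j| * M := by
            apply Finset.sum_le_sum
            intro j hj
            rw [abs_mul]
            exact mul_le_mul_of_nonneg_left
              (hψψ j k (Finset.ne_of_mem_erase hj)) (abs_nonneg _)
        _ ≤ ∑ j, |c j| * M := by
            apply Finset.sum_le_sum_of_subset_of_nonneg (Finset.erase_subset _ _)
            intro j _ _
            exact mul_nonneg (abs_nonneg _) hM0
        _ = M * S := by rw [Finset.mul_sum]; exact Finset.sum_congr rfl fun _ _ => mul_comm _ _
    have h4 : |⟪g, ψ k⟫| ≤ M := hcoh _ hgD _ (hψD k) (hgψ k)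
    calc |c k| ≤ |⟪g, ψ k⟫| + |∑ j ∈ Finset.univ.erase k, c j * ⟪ψ j, ψ k⟫| := by
          rw [h2]; exact abs_sub _ _
      _ ≤ M + M * S := add_le_add h4 h3
  -- bound S
  have hSsum : S ≤ (m : ℝ) * (M + M * S) := by
    calc S = ∑ j : Fin m, |c j| := rfl
      _ ≤ ∑ _j : Fin m, (M + M * S) := Finset.sum_le_sum fun j _ => hck j
      _ = (m : ℝ) * (M + M * S) := by simp [Finset.sum_const, nsmul_eq_mul]; ring
  have hmMS : (m : ℝ) * M * S ≤ (1 / 20) * S :=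
    mul_le_mul_of_nonneg_right hmM hS0
  have hSle : S ≤ 1 / 19 := by nlinarith [hSsum, hmM, hmMS]
  -- final estimate
  have hfinal : ⟪g - p, g'⟫ = ⟪g, g'⟫ - ∑ j, c j * ⟪ψ j, g'⟫ := by
    rw [inner_sub_left, hpinner g']
  have hbound : |∑ j, c j * ⟪ψ j, g'⟫| ≤ M * S := by
    calc |∑ j, c j * ⟪ψ j, g'⟫| ≤ ∑ j, |c j * ⟪ψ j, g'⟫| :=
          Finset.abs_sum_le_sum_abs _ _
      _ ≤ ∑ j, |c j| * M := by
          apply Finset.sum_le_sum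
          intro j _
          rw [abs_mul]
          exact mul_le_mul_of_nonneg_left
            (hcoh _ (hψD j) _ hg'D (Ne.symm (hg'ψ j))) (abs_nonneg _)
      _ = M * S := by rw [Finset.mul_sum]; exact Finset.sum_congr rfl fun _ _ => mul_comm _ _
  have hgg'M : |⟪g, g'⟫| ≤ M := hcoh _ hgD _ hg'D hgg'
  calc |⟪g - p, g'⟫| ≤ |⟪g, g'⟫| + |∑ j, c j * ⟪ψ j, g'⟫| := by
        rw [hfinal]; exact abs_sub _ _
    _ ≤ M + M * S := add_le_add hgg'M hbound
    _ ≤ 1.1 * M := by nlinarith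
end

section
/- (Main theorem) Let D be an M-coherent dictionary in a Hilbert space H and let f ∈ H. Then for every integer m with 1 ≤ m ≤ 1/(20M), the residual of the Orthogonal Greedy Algorithm after 2m steps satisfies ‖f − G^{OGA}_{2m}(f, D)‖ ≤ 3 σ_m(f, D), where σ_m(f, D) is the best m-term approximation error of f with respect to D. -/
set_option linter.unusedSectionVars false
set_option linter.unusedVariables false
set_option maxHeartbeats 10000000
open RealInnerProductSpace

section Helpers
variable {H : Type*} [NormedAddCommGroup H] [InnerProductSpace ℝ H]

lemma oga_inner_span_zero {v : H} {s : Set H} (h : ∀ w ∈ s, ⟪v, w⟫ = 0) :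
    ∀ z ∈ Submodule.span ℝ s, ⟪v, z⟫ = 0 := by
  intro z hz
  induction hz using Submodule.span_induction with
  | mem x hx => exact h x hx
  | zero => exact inner_zero_right v
  | add x y hx hy ihx ihy => rw [inner_add_right, ihx, ihy]; ring
  | smul a x hx ihx => rw [real_inner_smul_right, ihx]; ring

lemma oga_le_of_sq_le_sq {A B : ℝ} (hA : 0 ≤ A) (h : B ^ 2 ≤ A ^ 2) : B ≤ A := by
  nlinarith [sq_nonneg (A - B), sq_nonneg (A + B)]

/-- Gram expansion bound for finite combinations from a coherent dictionary. -/
lemma oga_gram_bound (D : Set H) (M : ℝ)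
    (hDnorm : ∀ φ ∈ D, ‖φ‖ = 1)
    (hcoh : ∀ φ ∈ D, ∀ ψ ∈ D, φ ≠ ψ → |⟪φ, ψ⟫| ≤ M)
    (Q : Finset H) (hQ : (↑Q : Set H) ⊆ D) (b : H → ℝ) :
    |‖∑ ψ ∈ Q, b ψ • ψ‖ ^ 2 - ∑ ψ ∈ Q, (b ψ) ^ 2|
      ≤ M * ((∑ ψ ∈ Q, |b ψ|) ^ 2 - ∑ ψ ∈ Q, (b ψ) ^ 2) := by
  classical
  have hexp : ‖∑ ψ ∈ Q, b ψ • ψ‖ ^ 2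
      = ∑ ψ ∈ Q, ∑ ψ' ∈ Q, b ψ * b ψ' * ⟪ψ, ψ'⟫ := by
    rw [← real_inner_self_eq_norm_sq, sum_inner]
    refine Finset.sum_congr rfl fun ψ hψ => ?_
    rw [inner_sum]
    refine Finset.sum_congr rfl fun ψ' hψ' => ?_
    rw [real_inner_smul_left, real_inner_smul_right]; ring
  have hsplit : ∀ ψ ∈ Q, ∑ ψ' ∈ Q, b ψ * b ψ' * ⟪ψ, ψ'⟫
      = (b ψ)^2 + ∑ ψ' ∈ Q.erase ψ, b ψ * b ψ' * ⟪ψ, ψ'⟫ := by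
    intro ψ hψ
    have h1 : ⟪ψ, ψ⟫ = 1 := by
      rw [real_inner_self_eq_norm_sq, hDnorm ψ (hQ hψ)]; norm_num
    have h2 : ∑ ψ' ∈ Q.erase ψ, b ψ * b ψ' * ⟪ψ, ψ'⟫
        = (∑ ψ' ∈ Q, b ψ * b ψ' * ⟪ψ, ψ'⟫) - b ψ * b ψ * ⟪ψ, ψ⟫ :=
      Finset.sum_erase_eq_sub hψ
    rw [h1] at h2
    rw [sq]
    linarith [h2]
  have hdiff : ‖∑ ψ ∈ Q, b ψ • ψ‖ ^ 2 - ∑ ψ ∈ Q, (b ψ)^2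
      = ∑ ψ ∈ Q, ∑ ψ' ∈ Q.erase ψ, b ψ * b ψ' * ⟪ψ, ψ'⟫ := by
    rw [hexp, ← Finset.sum_sub_distrib]
    refine Finset.sum_congr rfl fun ψ hψ => ?_
    rw [hsplit ψ hψ]; ring
  rw [hdiff]
  calc |∑ ψ ∈ Q, ∑ ψ' ∈ Q.erase ψ, b ψ * b ψ' * ⟪ψ, ψ'⟫|
      ≤ ∑ ψ ∈ Q, |∑ ψ' ∈ Q.erase ψ, b ψ * b ψ' * ⟪ψ, ψ'⟫| := Finset.abs_sum_le_sum_abs _ _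
    _ ≤ ∑ ψ ∈ Q, ∑ ψ' ∈ Q.erase ψ, |b ψ| * |b ψ'| * M := by
        refine Finset.sum_le_sum fun ψ hψ => ?_
        refine (Finset.abs_sum_le_sum_abs _ _).trans (Finset.sum_le_sum fun ψ' hψ' => ?_)
        rw [abs_mul, abs_mul]
        have hne : ψ ≠ ψ' := fun h => (Finset.ne_of_mem_erase hψ') h.symm
        have hcohψ : |⟪ψ, ψ'⟫| ≤ M :=
          hcoh ψ (hQ hψ) ψ' (hQ (Finset.mem_of_mem_erase hψ')) hne
        have : 0 ≤ |b ψ| * |b ψ'| := by positivity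
        nlinarith [abs_nonneg (b ψ), abs_nonneg (b ψ'), abs_nonneg (⟪ψ, ψ'⟫ : ℝ)]
    _ = M * ((∑ ψ ∈ Q, |b ψ|) ^ 2 - ∑ ψ ∈ Q, (b ψ)^2) := by
        have : ∀ ψ ∈ Q, ∑ ψ' ∈ Q.erase ψ, |b ψ| * |b ψ'| * M
            = M * (|b ψ| * ((∑ ψ' ∈ Q, |b ψ'|) - |b ψ|)) := by
          intro ψ hψ
          rw [Finset.sum_erase_eq_sub (f := fun ψ' => |b ψ| * |b ψ'| * M) hψ]
          rw [← Finset.sum_mul, ← Finset.mul_sum]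
          ring
        rw [Finset.sum_congr rfl this, ← Finset.mul_sum]
        congr 1
        have h3 : ∀ ψ ∈ Q, |b ψ| * ((∑ ψ' ∈ Q, |b ψ'|) - |b ψ|)
            = |b ψ| * (∑ ψ' ∈ Q, |b ψ'|) - (b ψ)^2 := by
          intro ψ hψ
          rw [mul_sub, ← sq_abs (b ψ)]; ring
        rw [Finset.sum_congr rfl h3, Finset.sum_sub_distrib, ← Finset.sum_mul, sq]
end Helpers

section Helpers2
variable {H : Type*} [NormedAddCommGroup H] [InnerProductSpace ℝ H]

lemma oga_sq_sum_le (Q : Finset H) (b : H → ℝ) :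
    (∑ ψ ∈ Q, |b ψ|) ^ 2 ≤ (Q.card : ℝ) * ∑ ψ ∈ Q, (b ψ) ^ 2 := by
  have := Finset.sum_mul_sq_le_sq_mul_sq Q (fun _ => (1 : ℝ)) (fun ψ => |b ψ|)
  simp only [one_mul, one_pow, Finset.sum_const, nsmul_eq_mul, mul_one] at this
  calc (∑ ψ ∈ Q, |b ψ|) ^ 2 ≤ (Q.card : ℝ) * ∑ ψ ∈ Q, |b ψ| ^ 2 := this
    _ = (Q.card : ℝ) * ∑ ψ ∈ Q, (b ψ) ^ 2 := by
        congr 1; exact Finset.sum_congr rfl fun ψ _ => sq_abs _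

lemma oga_gram_upper (D : Set H) (M : ℝ) (hM : 0 ≤ M)
    (hDnorm : ∀ φ ∈ D, ‖φ‖ = 1)
    (hcoh : ∀ φ ∈ D, ∀ ψ ∈ D, φ ≠ ψ → |⟪φ, ψ⟫| ≤ M)
    (Q : Finset H) (hQ : (↑Q : Set H) ⊆ D) (b : H → ℝ) :
    ‖∑ ψ ∈ Q, b ψ • ψ‖ ^ 2 ≤ (1 + (Q.card : ℝ) * M) * ∑ ψ ∈ Q, (b ψ) ^ 2 := by
  have h1 := oga_gram_bound D M hDnorm hcoh Q hQ b
  have h2 := oga_sq_sum_le Q b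
  have h3 : 0 ≤ ∑ ψ ∈ Q, (b ψ)^2 := Finset.sum_nonneg fun ψ _ => sq_nonneg _
  have h4 := abs_le.mp h1
  nlinarith [h4.2]

lemma oga_bessel (D : Set H) (M : ℝ) (hM : 0 ≤ M)
    (hDnorm : ∀ φ ∈ D, ‖φ‖ = 1)
    (hcoh : ∀ φ ∈ D, ∀ ψ ∈ D, φ ≠ ψ → |⟪φ, ψ⟫| ≤ M)
    (Q : Finset H) (hQ : (↑Q : Set H) ⊆ D) (u : H) :
    ∑ ψ ∈ Q, (⟪u, ψ⟫ : ℝ) ^ 2 ≤ (1 + (Q.card : ℝ) * M) * ‖u‖ ^ 2 := by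
  set E : ℝ := ∑ ψ ∈ Q, (⟪u, ψ⟫ : ℝ) ^ 2 with hEdef
  have hE0 : 0 ≤ E := Finset.sum_nonneg fun ψ _ => sq_nonneg _
  set v : H := ∑ ψ ∈ Q, (⟪u, ψ⟫ : ℝ) • ψ with hvdef
  have hEv : (⟪u, v⟫ : ℝ) = E := by
    rw [hvdef, inner_sum]
    exact Finset.sum_congr rfl fun ψ _ => by rw [real_inner_smul_right, sq]
  have hv : ‖v‖ ^ 2 ≤ (1 + (Q.card : ℝ) * M) * E :=
    oga_gram_upper D M hM hDnorm hcoh Q hQ _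
  have hC : 0 ≤ (1 + (Q.card : ℝ) * M) := by positivity
  rcases eq_or_lt_of_le hE0 with h | h
  · rw [← h]; positivity
  · have h5 : E ^ 2 ≤ ‖u‖^2 * ‖v‖^2 := by
      rw [← hEv]
      calc (⟪u, v⟫ : ℝ)^2 = |(⟪u, v⟫ : ℝ)|^2 := (sq_abs _).symm
        _ ≤ (‖u‖ * ‖v‖)^2 := by
            have h9 := abs_real_inner_le_norm u v
            nlinarith [abs_nonneg (⟪u, v⟫ : ℝ), norm_nonneg u, norm_nonneg v]
        _ = ‖u‖^2 * ‖v‖^2 := by ring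
    have h6 : E^2 ≤ ‖u‖^2 * ((1 + (Q.card : ℝ) * M) * E) := le_trans h5 (by nlinarith [sq_nonneg ‖u‖])
    have h7 : E * E ≤ (‖u‖^2 * (1 + (Q.card : ℝ) * M)) * E := by nlinarith [h6]
    have h8 := le_of_mul_le_mul_right h7 h
    linarith [h8]
end Helpers2


section StepLemma
variable {H : Type*} [NormedAddCommGroup H] [InnerProductSpace ℝ H]

lemma oga_step (D : Set H) (M : ℝ) (hM : 0 ≤ M)
    (hDnorm : ∀ φ ∈ D, ‖φ‖ = 1)
    (hcoh : ∀ φ ∈ D, ∀ ψ ∈ D, φ ≠ ψ → |⟪φ, ψ⟫| ≤ M)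
    (m : ℕ) (hm : 1 ≤ m) (hmM : (m : ℝ) * M ≤ 1/20)
    [DecidableEq H] (T Γf : Finset H) (hTD : (↑T : Set H) ⊆ D) (hΓD : (↑Γf : Set H) ⊆ D)
    (hcard : T.card + Γf.card ≤ 3 * m)
    (a p : H → ℝ) (u v : H)
    (hv : v - u = (∑ ψ ∈ T, a ψ • ψ) - ∑ ψ ∈ Γf, p ψ • ψ) :
    ∃ E : ℝ, 0 ≤ E ∧
      Real.sqrt m * E ≤ 0.09394 * (‖v‖ + ‖u‖) ∧
      (∀ ψ ∈ D, ψ ∉ T → ψ ∉ Γf → |⟪v, ψ⟫ - ⟪u, ψ⟫| ≤ E) ∧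
      (∀ ψ₀ ∈ T, ψ₀ ∉ Γf → |⟪v, ψ₀⟫ - a ψ₀ - ⟪u, ψ₀⟫| ≤ E) ∧
      (17/20) * (∑ ψ ∈ T \ Γf, (a ψ)^2) ≤ (‖v‖ + ‖u‖)^2 := by
  classical
  obtain ⟨S, hSdef⟩ : ∃ S : Finset H, S = T ∪ Γf := ⟨_, rfl⟩
  obtain ⟨b, hbdef⟩ : ∃ b : H → ℝ,
      b = fun ψ => (if ψ ∈ T then a ψ else 0) - (if ψ ∈ Γf then p ψ else 0) := ⟨_, rfl⟩
  have hSD : (↑S : Set H) ⊆ D := by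
    rw [hSdef, Finset.coe_union]
    exact Set.union_subset hTD hΓD
  have hbsum : ∑ ψ ∈ S, b ψ • ψ = v - u := by
    have h1 : ∑ ψ ∈ S, b ψ • ψ
        = (∑ ψ ∈ S, (if ψ ∈ T then a ψ else 0) • ψ)
          - ∑ ψ ∈ S, (if ψ ∈ Γf then p ψ else 0) • ψ := by
      rw [← Finset.sum_sub_distrib]
      exact Finset.sum_congr rfl fun ψ _ => by rw [hbdef]; simp [sub_smul]
    have h2 : ∑ ψ ∈ S, (if ψ ∈ T then a ψ else 0) • ψ = ∑ ψ ∈ T, a ψ • ψ := by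
      rw [hSdef, ← Finset.sum_subset Finset.subset_union_left
        (fun x _ hx => by rw [if_neg hx, zero_smul])]
      exact Finset.sum_congr rfl fun ψ hψ => by rw [if_pos hψ]
    have h3 : ∑ ψ ∈ S, (if ψ ∈ Γf then p ψ else 0) • ψ = ∑ ψ ∈ Γf, p ψ • ψ := by
      rw [hSdef, ← Finset.sum_subset Finset.subset_union_right
        (fun x _ hx => by rw [if_neg hx, zero_smul])]
      exact Finset.sum_congr rfl fun ψ hψ => by rw [if_pos hψ]
    rw [h1, h2, h3, hv]
  obtain ⟨Z2, hZ2def⟩ : ∃ z : ℝ, z = ∑ ψ ∈ S, (b ψ)^2 := ⟨_, rfl⟩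
  obtain ⟨l1, hl1def⟩ : ∃ z : ℝ, z = ∑ ψ ∈ S, |b ψ| := ⟨_, rfl⟩
  have hZ20 : 0 ≤ Z2 := hZ2def ▸ Finset.sum_nonneg fun ψ _ => sq_nonneg _
  have hl10 : 0 ≤ l1 := hl1def ▸ Finset.sum_nonneg fun ψ _ => abs_nonneg _
  have hcardS : (S.card : ℝ) ≤ 3 * (m : ℝ) := by
      have h4 : S.card ≤ 3 * m := by
        rw [hSdef]
        exact le_trans (Finset.card_union_le T Γf) hcard
      exact_mod_cast h4
  have hl1sq : l1^2 ≤ (3 * (m : ℝ)) * Z2 := by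
    rw [hl1def, hZ2def]
    refine le_trans (oga_sq_sum_le S b) ?_
    refine mul_le_mul_of_nonneg_right hcardS ?_
    exact Finset.sum_nonneg fun ψ _ => sq_nonneg _
  have hgram : |‖∑ ψ ∈ S, b ψ • ψ‖ ^ 2 - Z2| ≤ M * (l1 ^ 2 - Z2) := by
    rw [hZ2def, hl1def]
    exact oga_gram_bound D M hDnorm hcoh S hSD b
  have h5 : ‖∑ ψ ∈ S, b ψ • ψ‖^2 ≤ (‖v‖ + ‖u‖)^2 := by
    rw [hbsum]
    have := norm_sub_le v u
    nlinarith [norm_nonneg (v - u), norm_nonneg v, norm_nonneg u]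
  have hMl1 : M * l1^2 ≤ (3/20) * Z2 := by
    have e1 : M * l1^2 ≤ M * ((3 * (m:ℝ)) * Z2) := mul_le_mul_of_nonneg_left hl1sq hM
    have e2 : M * ((3 * (m:ℝ)) * Z2) ≤ (3/20) * Z2 := by nlinarith
    linarith
  have hZ2b : (17/20) * Z2 ≤ (‖v‖ + ‖u‖)^2 := by
    have h4 := (abs_le.mp hgram).1
    have h6 : 0 ≤ M * Z2 := mul_nonneg hM hZ20
    nlinarith [h4, h5]
  -- (m) * (M*l1)^2 ≤ (3/340) (x+δ)^2
  have hE2 : (m : ℝ) * (M * l1)^2 ≤ (3/340) * (‖v‖ + ‖u‖)^2 := by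
    have e1 : (M * l1)^2 = M^2 * l1^2 := by ring
    have e2 : M^2 * l1^2 ≤ M^2 * ((3 * (m:ℝ)) * Z2) :=
      mul_le_mul_of_nonneg_left hl1sq (sq_nonneg M)
    have e3 : ((m:ℝ) * M)^2 ≤ (1/20)^2 := by
      have hm0 : (0:ℝ) ≤ (m:ℝ) * M := mul_nonneg (by positivity) hM
      nlinarith
    have e4 : (m:ℝ) * (M^2 * ((3 * (m:ℝ)) * Z2)) = 3 * ((m:ℝ)*M)^2 * Z2 := by ring
    have e5 : (m:ℝ) * (M * l1)^2 ≤ 3 * ((m:ℝ)*M)^2 * Z2 := by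
      rw [← e4, e1]
      exact mul_le_mul_of_nonneg_left e2 (by positivity)
    have e6 : 3 * ((m:ℝ)*M)^2 * Z2 ≤ (3/400) * Z2 := by nlinarith [hZ20, e3]
    nlinarith [hZ2b, hZ20, e5, e6]
  have hEs : Real.sqrt m * (M * l1) ≤ 0.09394 * (‖v‖ + ‖u‖) := by
    apply oga_le_of_sq_le_sq (by positivity)
    have e1 : (Real.sqrt m * (M * l1))^2 = (m : ℝ) * (M * l1)^2 := by
      rw [mul_pow, Real.sq_sqrt (by positivity : (0:ℝ) ≤ (m:ℝ))]
    rw [e1]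
    nlinarith [hE2, sq_nonneg (‖v‖ + ‖u‖)]
  -- inner product expansion
  have hinner : ∀ ψ₀ : H, (⟪v, ψ₀⟫ : ℝ) - ⟪u, ψ₀⟫ = ∑ ψ ∈ S, b ψ * ⟪ψ, ψ₀⟫ := by
    intro ψ₀
    have e1 : (⟪v - u, ψ₀⟫ : ℝ) = ⟪v, ψ₀⟫ - ⟪u, ψ₀⟫ := inner_sub_left v u ψ₀
    rw [← e1, ← hbsum, sum_inner]
    exact Finset.sum_congr rfl fun ψ _ => real_inner_smul_left ψ ψ₀ (b ψ)
  have hcross : ∀ ψ₀ ∈ D, ψ₀ ∉ T → ψ₀ ∉ Γf → |(⟪v, ψ₀⟫ : ℝ) - ⟪u, ψ₀⟫| ≤ M * l1 := by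
    intro ψ₀ hψ₀D hψ₀T hψ₀Γ
    rw [hinner ψ₀]
    calc |∑ ψ ∈ S, b ψ * ⟪ψ, ψ₀⟫| ≤ ∑ ψ ∈ S, |b ψ * ⟪ψ, ψ₀⟫| := Finset.abs_sum_le_sum_abs _ _
      _ ≤ ∑ ψ ∈ S, |b ψ| * M := by
          refine Finset.sum_le_sum fun ψ hψ => ?_
          rw [abs_mul]
          have hne : ψ ≠ ψ₀ := by
            rintro rfl
            rw [hSdef] at hψ
            rcases Finset.mem_union.mp hψ with h | h
            exacts [hψ₀T h, hψ₀Γ h]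
          have := hcoh ψ (hSD hψ) ψ₀ hψ₀D hne
          nlinarith [abs_nonneg (b ψ), abs_nonneg (⟪ψ, ψ₀⟫ : ℝ)]
      _ = M * l1 := by rw [hl1def, ← Finset.sum_mul]; ring
  have hcross2 : ∀ ψ₀ ∈ T, ψ₀ ∉ Γf → |(⟪v, ψ₀⟫ : ℝ) - a ψ₀ - ⟪u, ψ₀⟫| ≤ M * l1 := by
    intro ψ₀ hψ₀T hψ₀Γ
    have hψ₀S : ψ₀ ∈ S := by rw [hSdef]; exact Finset.mem_union_left _ hψ₀T
    have hψ₀D : ψ₀ ∈ D := hSD hψ₀S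
    have hb0 : b ψ₀ = a ψ₀ := by rw [hbdef]; simp [hψ₀T, hψ₀Γ]
    have e1 : ⟪ψ₀, ψ₀⟫ = (1:ℝ) := by
      rw [real_inner_self_eq_norm_sq, hDnorm ψ₀ hψ₀D]; norm_num
    have e2 : ∑ ψ ∈ S.erase ψ₀, b ψ * ⟪ψ, ψ₀⟫
        = (∑ ψ ∈ S, b ψ * ⟪ψ, ψ₀⟫) - b ψ₀ * ⟪ψ₀, ψ₀⟫ := Finset.sum_erase_eq_sub hψ₀S
    have e3 : (⟪v, ψ₀⟫ : ℝ) - a ψ₀ - ⟪u, ψ₀⟫ = ∑ ψ ∈ S.erase ψ₀, b ψ * ⟪ψ, ψ₀⟫ := by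
      rw [e2, ← hinner ψ₀, hb0, e1]; ring
    rw [e3]
    calc |∑ ψ ∈ S.erase ψ₀, b ψ * ⟪ψ, ψ₀⟫| ≤ ∑ ψ ∈ S.erase ψ₀, |b ψ * ⟪ψ, ψ₀⟫| :=
          Finset.abs_sum_le_sum_abs _ _
      _ ≤ ∑ ψ ∈ S.erase ψ₀, |b ψ| * M := by
          refine Finset.sum_le_sum fun ψ hψ => ?_
          rw [abs_mul]
          have hne : ψ ≠ ψ₀ := Finset.ne_of_mem_erase hψ
          have := hcoh ψ (hSD (Finset.mem_of_mem_erase hψ)) ψ₀ hψ₀D hne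
          nlinarith [abs_nonneg (b ψ), abs_nonneg (⟪ψ, ψ₀⟫ : ℝ)]
      _ ≤ ∑ ψ ∈ S, |b ψ| * M := by
          refine Finset.sum_le_sum_of_subset_of_nonneg (Finset.erase_subset _ _)
            fun ψ _ _ => ?_
          positivity
      _ = M * l1 := by rw [hl1def, ← Finset.sum_mul]; ring
  have hfinal : (17/20) * (∑ ψ ∈ T \ Γf, (a ψ)^2) ≤ (‖v‖ + ‖u‖)^2 := by
    have e1 : ∑ ψ ∈ T \ Γf, (a ψ)^2 = ∑ ψ ∈ T \ Γf, (b ψ)^2 := by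
      refine Finset.sum_congr rfl fun ψ hψ => ?_
      have h1 := (Finset.mem_sdiff.mp hψ).1
      have h2 := (Finset.mem_sdiff.mp hψ).2
      rw [hbdef]; simp [h1, h2]
    have e2 : ∑ ψ ∈ T \ Γf, (b ψ)^2 ≤ Z2 := by
      rw [hZ2def]
      refine Finset.sum_le_sum_of_subset_of_nonneg ?_ fun ψ _ _ => sq_nonneg _
      rw [hSdef]
      exact fun ψ hψ => Finset.mem_union_left _ (Finset.mem_sdiff.mp hψ).1
    nlinarith [hZ2b]
  exact ⟨M * l1, mul_nonneg hM hl10, hEs, hcross, hcross2, hfinal⟩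
end StepLemma


/-- Main theorem: for an `M`-coherent dictionary `D` and `1 ≤ m ≤ 1/(20M)` (i.e. `mM ≤ 1/20`),
the residual of the Orthogonal Greedy Algorithm after `2m` steps satisfies
`‖f - G^{OGA}_{2m}(f, D)‖ = ‖f_{2m}‖ ≤ 3 σₘ(f, D)`. -/
theorem oga_lebesgue_inequality {H : Type*} [NormedAddCommGroup H] [InnerProductSpace ℝ H]
    [CompleteSpace H]
    (D : Set H) (M : ℝ)
    (hDnorm : ∀ φ ∈ D, ‖φ‖ = 1)
    (hDdense : Dense (Submodule.span ℝ D : Set H))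
    (hcoh : ∀ φ ∈ D, ∀ ψ ∈ D, φ ≠ ψ → |⟪φ, ψ⟫| ≤ M)
    (m : ℕ) (hm : 1 ≤ m) (hmM : (m : ℝ) * M ≤ 1 / 20)
    (f : H) (fres : ℕ → H) (g : ℕ → H)
    (hf0 : fres 0 = f)
    (hgD : ∀ k, 1 ≤ k → k ≤ 2 * m → g k ∈ D)
    (hgreedy : ∀ k, k < 2 * m → ∀ φ ∈ D, |⟪fres k, φ⟫| ≤ |⟪fres k, g (k + 1)⟫|)
    (hres_span : ∀ k, k ≤ 2 * m → f - fres k ∈ Submodule.span ℝ (g '' Set.Icc 1 k))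
    (hres_orth : ∀ k, k ≤ 2 * m → ∀ i, 1 ≤ i → i ≤ k → ⟪fres k, g i⟫ = 0) :
    ‖fres (2 * m)‖ ≤ 3 *
      sInf {r : ℝ | ∃ (c : Fin m → ℝ) (φ : Fin m → H),
        (∀ i, φ i ∈ D) ∧ r = ‖f - ∑ i, c i • φ i‖} := by
  classical
  have hm2 : 1 ≤ 2 * m := by omega
  have hg1D : g 1 ∈ D := hgD 1 le_rfl hm2
  have hSnonneg : 0 ≤ sInf {r : ℝ | ∃ (c : Fin m → ℝ) (φ : Fin m → H),
      (∀ i, φ i ∈ D) ∧ r = ‖f - ∑ i, c i • φ i‖} := by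
    apply Real.sInf_nonneg
    rintro r ⟨c, φv, hφv, rfl⟩
    positivity
  by_cases hD2 : ∀ φ₁ ∈ D, ∀ φ₂ ∈ D, φ₁ = φ₂
  · -- degenerate case : D has at most one element
    have h1 : ∀ w ∈ D, ⟪fres (2 * m), w⟫ = 0 := by
      intro w hw
      have hwg : w = g 1 := hD2 w hw (g 1) hg1D
      rw [hwg]
      exact hres_orth (2 * m) le_rfl 1 le_rfl hm2
    have h2 := oga_inner_span_zero h1
    have h4 : IsClosed {w : H | ⟪fres (2 * m), w⟫ = (0 : ℝ)} :=
      isClosed_eq (Continuous.inner continuous_const continuous_id) continuous_const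
    have h5 : closure (Submodule.span ℝ D : Set H) ⊆ {w : H | ⟪fres (2 * m), w⟫ = (0 : ℝ)} :=
      closure_minimal h2 h4
    have h6 : fres (2 * m) ∈ closure (Submodule.span ℝ D : Set H) := by
      rw [hDdense.closure_eq]; trivial
    have h7 : ⟪fres (2 * m), fres (2 * m)⟫ = (0 : ℝ) := h5 h6
    have h8 : fres (2 * m) = 0 := inner_self_eq_zero.mp h7
    rw [h8, norm_zero]
    linarith
  · push_neg at hD2
    obtain ⟨φ₁, hφ₁, φ₂, hφ₂, hne12⟩ := hD2
    have hM0 : 0 ≤ M := le_trans (abs_nonneg _) (hcoh φ₁ hφ₁ φ₂ hφ₂ hne12)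
    suffices hkey : ∀ (c : Fin m → ℝ) (φv : Fin m → H), (∀ i, φv i ∈ D) →
        ‖fres (2 * m)‖ ≤ 3 * ‖f - ∑ i, c i • φv i‖ by
      have hne : Set.Nonempty {r : ℝ | ∃ (c : Fin m → ℝ) (φ : Fin m → H),
          (∀ i, φ i ∈ D) ∧ r = ‖f - ∑ i, c i • φ i‖} :=
        ⟨‖f - ∑ i : Fin m, (0 : ℝ) • φ₁‖, fun _ => 0, fun _ => φ₁, fun _ => hφ₁, rfl⟩
      have h8 : ‖fres (2 * m)‖ / 3 ≤ sInf {r : ℝ | ∃ (c : Fin m → ℝ) (φ : Fin m → H),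
          (∀ i, φ i ∈ D) ∧ r = ‖f - ∑ i, c i • φ i‖} := by
        refine le_csInf hne ?_
        rintro r ⟨c, φv, hφv, rfl⟩
        have := hkey c φv hφv
        linarith
      linarith
    intro c φv hφvD
    by_contra hX
    push_neg at hX
    obtain ⟨u, hudef⟩ : ∃ u : H, u = f - ∑ i, c i • φv i := ⟨_, rfl⟩
    rw [← hudef] at hX
    -- grouped coefficients
    obtain ⟨T, hTdef⟩ : ∃ T : Finset H, T = Finset.image φv Finset.univ := ⟨_, rfl⟩
    obtain ⟨a, hadef⟩ : ∃ a : H → ℝ,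
        a = fun ψ => ∑ i ∈ Finset.univ.filter (fun i => φv i = ψ), c i := ⟨_, rfl⟩
    have hTD : (↑T : Set H) ⊆ D := by
      rw [hTdef]
      intro ψ hψ
      simp only [Finset.coe_image, Set.mem_image, Finset.mem_coe, Finset.mem_univ] at hψ
      obtain ⟨i, _, rfl⟩ := hψ
      exact hφvD i
    have hTcard : T.card ≤ m := by
      rw [hTdef]
      refine le_trans Finset.card_image_le ?_
      simp
    have hAT : ∑ ψ ∈ T, a ψ • ψ = ∑ i, c i • φv i := by
      rw [hTdef, hadef]
      rw [← Finset.sum_fiberwise_of_maps_to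
        (fun i _ => Finset.mem_image_of_mem φv (Finset.mem_univ i)) (fun i => c i • φv i)]
      refine Finset.sum_congr rfl fun ψ _ => ?_
      rw [Finset.sum_smul]
      refine Finset.sum_congr rfl fun i hi => ?_
      rw [(Finset.mem_filter.mp hi).2]
    have hfA : f = (∑ ψ ∈ T, a ψ • ψ) + u := by
      rw [hAT, hudef]; abel
    obtain ⟨Γ, hΓdef⟩ : ∃ Γ : ℕ → Finset H, Γ = fun n => Finset.image g (Finset.Icc 1 n) :=
      ⟨_, rfl⟩
    have hΓD : ∀ n, n ≤ 2 * m → (↑(Γ n) : Set H) ⊆ D := by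
      intro n hn ψ hψ
      rw [hΓdef] at hψ
      simp only [Finset.coe_image, Set.mem_image, Finset.mem_coe, Finset.mem_Icc] at hψ
      obtain ⟨i, ⟨hi1, hi2⟩, rfl⟩ := hψ
      exact hgD i hi1 (le_trans hi2 hn)
    have hΓcard : ∀ n, (Γ n).card ≤ n := by
      intro n
      rw [hΓdef]
      refine le_trans Finset.card_image_le ?_
      simp [Nat.card_Icc]
    have hΓmono : ∀ n n', n ≤ n' → Γ n ⊆ Γ n' := by
      intro n n' h
      rw [hΓdef]
      exact Finset.image_subset_image (Finset.Icc_subset_Icc le_rfl h)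
    have hΓcoe : ∀ n, (g '' Set.Icc 1 n) = (↑(Γ n) : Set H) := by
      intro n
      rw [hΓdef, Finset.coe_image, Finset.coe_Icc]
    have hspan : ∀ n, n ≤ 2 * m → f - fres n ∈ Submodule.span ℝ (↑(Γ n) : Set H) := by
      intro n hn
      rw [← hΓcoe]
      exact hres_span n hn
    have hTorth : ∀ n, n ≤ 2 * m → ∀ ψ ∈ Γ n, ⟪fres n, ψ⟫ = (0 : ℝ) := by
      intro n hn ψ hψ
      rw [hΓdef] at hψ
      simp only [Finset.mem_image, Finset.mem_Icc] at hψ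
      obtain ⟨i, ⟨hi1, hi2⟩, rfl⟩ := hψ
      exact hres_orth n hn i hi1 hi2
    have horthΓ : ∀ n, n ≤ 2 * m → ∀ z ∈ Submodule.span ℝ (↑(Γ n) : Set H),
        ⟪fres n, z⟫ = (0 : ℝ) := by
      intro n hn
      exact oga_inner_span_zero (hTorth n hn)
    have hδ0 : 0 ≤ ‖u‖ := norm_nonneg u
    have hxf : 0 < ‖fres (2 * m)‖ := lt_of_le_of_lt (by positivity) hX
    have hmono : ∀ n, n ≤ 2 * m → ‖fres (2 * m)‖ ≤ ‖fres n‖ := by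
      intro n hn
      have h1 : fres (2 * m) - fres n ∈ Submodule.span ℝ (↑(Γ (2 * m)) : Set H) := by
        have e1 : fres (2 * m) - fres n = (f - fres n) - (f - fres (2 * m)) := by abel
        rw [e1]
        refine sub_mem ?_ (hspan (2 * m) le_rfl)
        refine Submodule.span_mono ?_ (hspan n hn)
        exact_mod_cast Finset.coe_subset.mpr (hΓmono n (2 * m) hn)
      have h2 : ⟪fres (2 * m), fres (2 * m) - fres n⟫ = (0 : ℝ) :=
        horthΓ (2 * m) le_rfl _ h1
      have h3 : (⟪fres (2 * m), fres (2 * m)⟫ : ℝ) = ⟪fres (2 * m), fres n⟫ := by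
        rw [inner_sub_right] at h2
        linarith
      have h4 : ‖fres (2 * m)‖ ^ 2 ≤ ‖fres (2 * m)‖ * ‖fres n‖ := by
        rw [← real_inner_self_eq_norm_sq, h3]
        exact le_trans (le_abs_self _) (abs_real_inner_le_norm _ _)
      nlinarith [hxf]
    have hx3 : ∀ n, n ≤ 2 * m → 3 * ‖u‖ < ‖fres n‖ :=
      fun n hn => lt_of_lt_of_le hX (hmono n hn)
    have hdual : ∀ n, n < 2 * m → ‖fres n‖ ^ 2 ≤
        (∑ ψ ∈ T \ Γ n, |a ψ|) * |⟪fres n, g (n + 1)⟫| + ‖u‖ * ‖fres n‖ := by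
      intro n hn
      have hn' : n ≤ 2 * m := le_of_lt hn
      have h1 : (⟪fres n, f⟫ : ℝ) = ‖fres n‖ ^ 2 := by
        have e1 : (⟪fres n, f - fres n⟫ : ℝ) = 0 := horthΓ n hn' _ (hspan n hn')
        rw [inner_sub_right, real_inner_self_eq_norm_sq] at e1
        linarith
      have h2 : (⟪fres n, f⟫ : ℝ) = (∑ ψ ∈ T, a ψ * ⟪fres n, ψ⟫) + ⟪fres n, u⟫ := by
        conv_lhs => rw [hfA]
        rw [inner_add_right, inner_sum]
        congr 1
        exact Finset.sum_congr rfl fun ψ _ => real_inner_smul_right _ _ _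
      have h3 : ∑ ψ ∈ T, a ψ * ⟪fres n, ψ⟫ = ∑ ψ ∈ T \ Γ n, a ψ * ⟪fres n, ψ⟫ := by
        rw [← Finset.sum_sdiff (Finset.inter_subset_left : T ∩ Γ n ⊆ T)]
        have e3 : ∑ ψ ∈ T ∩ Γ n, a ψ * ⟪fres n, ψ⟫ = 0 :=
          Finset.sum_eq_zero fun ψ hψ => by
            rw [hTorth n hn' ψ (Finset.mem_inter.mp hψ).2, mul_zero]
        rw [e3, add_zero, Finset.sdiff_inter_self_left]
      have h4 : ∑ ψ ∈ T \ Γ n, a ψ * ⟪fres n, ψ⟫ ≤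
          ∑ ψ ∈ T \ Γ n, |a ψ| * |⟪fres n, g (n + 1)⟫| := by
        refine Finset.sum_le_sum fun ψ hψ => ?_
        have hψD : ψ ∈ D := hTD (Finset.mem_coe.mpr (Finset.mem_sdiff.mp hψ).1)
        have h5 := hgreedy n hn ψ hψD
        calc a ψ * ⟪fres n, ψ⟫ ≤ |a ψ * ⟪fres n, ψ⟫| := le_abs_self _
          _ = |a ψ| * |⟪fres n, ψ⟫| := abs_mul _ _
          _ ≤ |a ψ| * |⟪fres n, g (n + 1)⟫| :=
              mul_le_mul_of_nonneg_left h5 (abs_nonneg _)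
      have h5 : (⟪fres n, u⟫ : ℝ) ≤ ‖u‖ * ‖fres n‖ := by
        refine le_trans (le_trans (le_abs_self _) (abs_real_inner_le_norm _ _)) ?_
        rw [mul_comm]
      rw [← Finset.sum_mul] at h4
      rw [← h1, h2, h3]
      linarith
    have hGpos : ∀ n, n < 2 * m → 0 < |⟪fres n, g (n + 1)⟫| := by
      intro n hn
      rcases lt_or_eq_of_le (abs_nonneg (⟪fres n, g (n + 1)⟫ : ℝ)) with h | h
      · exact h
      · exfalso
        have h6 := hdual n hn
        rw [← h, mul_zero] at h6
        have h7 := hx3 n (le_of_lt hn)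
        nlinarith [norm_nonneg (fres n), norm_nonneg u]
    have hnew : ∀ n, n < 2 * m → g (n + 1) ∉ Γ n := by
      intro n hn hmem
      have h6 : ⟪fres n, g (n + 1)⟫ = (0 : ℝ) := hTorth n (le_of_lt hn) _ hmem
      have h7 := hGpos n hn
      rw [h6, abs_zero] at h7
      exact lt_irrefl 0 h7
    have hinj : ∀ n₁, n₁ < 2 * m → ∀ n₂, n₂ < 2 * m → n₁ ≠ n₂ → g (n₁ + 1) ≠ g (n₂ + 1) := by
      have key : ∀ n₁ n₂, n₁ < n₂ → n₂ < 2 * m → g (n₁ + 1) ≠ g (n₂ + 1) := by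
        intro n₁ n₂ h12 h2m heq
        apply hnew n₂ h2m
        rw [← heq, hΓdef]
        exact Finset.mem_image_of_mem g (Finset.mem_Icc.mpr ⟨by omega, by omega⟩)
      intro n₁ h₁ n₂ h₂ hne
      rcases lt_or_gt_of_ne hne with h | h
      · exact key n₁ n₂ h h₂
      · exact fun heq => key n₂ n₁ h h₁ heq.symm
    have hbad : ∀ n, n < 2 * m → g (n + 1) ∉ T → ∃ E : ℝ, 0 ≤ E ∧
        Real.sqrt m * E ≤ 0.09394 * (‖fres n‖ + ‖u‖) ∧
        (∀ ψ₀ ∈ T, ψ₀ ∉ Γ n → |(⟪fres n, ψ₀⟫ : ℝ) - a ψ₀ - ⟪u, ψ₀⟫| ≤ E) ∧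
        |(⟪fres n, g (n + 1)⟫ : ℝ)| ≤ E + |(⟪u, g (n + 1)⟫ : ℝ)| ∧
        0.92191 * (‖fres n‖ * (‖fres n‖ - ‖u‖)) - 0.09394 * (‖fres n‖ + ‖u‖) ^ 2
          ≤ Real.sqrt m * |(⟪u, g (n + 1)⟫ : ℝ)| * (‖fres n‖ + ‖u‖) ∧
        1.014 * ‖u‖ ^ 2 ≤ (m : ℝ) * (⟪u, g (n + 1)⟫ : ℝ) ^ 2 := by
      intro n hn hbadT
      have hn' : n ≤ 2 * m := le_of_lt hn
      obtain ⟨p, -, hp⟩ := Submodule.mem_span_finset.mp (hspan n hn')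
      have hv : fres n - u = (∑ ψ ∈ T, a ψ • ψ) - ∑ ψ ∈ Γ n, p ψ • ψ := by
        rw [hp]
        conv_rhs => rw [hfA]
        abel
      have hcard3 : T.card + (Γ n).card ≤ 3 * m := by
        have h1 := hΓcard n
        omega
      obtain ⟨E, hE0, hEs, hcrossD, hcross2, hz⟩ :=
        oga_step D M hM0 hDnorm hcoh m hm hmM T (Γ n) hTD (hΓD n hn') hcard3 a p u (fres n) hv
      have hgn1D : g (n + 1) ∈ D := hgD (n + 1) (by omega) (by omega)
      have hGEw : |(⟪fres n, g (n + 1)⟫ : ℝ)| ≤ E + |(⟪u, g (n + 1)⟫ : ℝ)| := by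
        have h1 := hcrossD (g (n + 1)) hgn1D hbadT (hnew n hn)
        have h2 := abs_le.mp h1
        have h3 := le_abs_self (⟪u, g (n + 1)⟫ : ℝ)
        have h4 := neg_abs_le (⟪u, g (n + 1)⟫ : ℝ)
        rw [abs_le]
        constructor <;> linarith
      have hxn := hx3 n hn'
      have hx0 : (0 : ℝ) < ‖fres n‖ := lt_of_le_of_lt (by positivity) hxn
      have hxδ0 : (0 : ℝ) < ‖fres n‖ + ‖u‖ := by linarith
      have hsq0 : (0 : ℝ) ≤ ∑ ψ ∈ T \ Γ n, (a ψ) ^ 2 :=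
        Finset.sum_nonneg fun ψ _ => sq_nonneg _
      have hs2 : (∑ ψ ∈ T \ Γ n, |a ψ|) ^ 2 ≤ (m : ℝ) * ∑ ψ ∈ T \ Γ n, (a ψ) ^ 2 := by
        refine le_trans (oga_sq_sum_le _ a) ?_
        refine mul_le_mul_of_nonneg_right ?_ hsq0
        have : (T \ Γ n).card ≤ m := le_trans (Finset.card_le_card Finset.sdiff_subset) hTcard
        exact_mod_cast this
      have hdualn := hdual n hn
      have hG0 : (0 : ℝ) ≤ |(⟪fres n, g (n + 1)⟫ : ℝ)| := abs_nonneg _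
      have hs0 : (0 : ℝ) ≤ ∑ ψ ∈ T \ Γ n, |a ψ| :=
        Finset.sum_nonneg fun ψ _ => abs_nonneg _
      have hsG : ‖fres n‖ * (‖fres n‖ - ‖u‖) ≤
          (∑ ψ ∈ T \ Γ n, |a ψ|) * |(⟪fres n, g (n + 1)⟫ : ℝ)| := by nlinarith [hdualn]
      have hxxd0 : (0 : ℝ) ≤ ‖fres n‖ * (‖fres n‖ - ‖u‖) := by nlinarith
      have h2 : (‖fres n‖ * (‖fres n‖ - ‖u‖)) ^ 2 ≤
          ((m : ℝ) * ∑ ψ ∈ T \ Γ n, (a ψ) ^ 2) * |(⟪fres n, g (n + 1)⟫ : ℝ)| ^ 2 := by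
        have e1 : (‖fres n‖ * (‖fres n‖ - ‖u‖)) ^ 2 ≤
            ((∑ ψ ∈ T \ Γ n, |a ψ|) * |(⟪fres n, g (n + 1)⟫ : ℝ)|) ^ 2 :=
          pow_le_pow_left₀ hxxd0 hsG 2
        have e2 : ((∑ ψ ∈ T \ Γ n, |a ψ|) * |(⟪fres n, g (n + 1)⟫ : ℝ)|) ^ 2
            = (∑ ψ ∈ T \ Γ n, |a ψ|) ^ 2 * |(⟪fres n, g (n + 1)⟫ : ℝ)| ^ 2 := by ring
        nlinarith [sq_nonneg (|(⟪fres n, g (n + 1)⟫ : ℝ)|)]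
      have h3 : (‖fres n‖ * (‖fres n‖ - ‖u‖)) ^ 2 ≤
          (20 / 17) * ((m : ℝ) * (‖fres n‖ + ‖u‖) ^ 2 * |(⟪fres n, g (n + 1)⟫ : ℝ)| ^ 2) := by
        have hm0' : (0 : ℝ) ≤ (m : ℝ) := by positivity
        have e3 : (m : ℝ) * ∑ ψ ∈ T \ Γ n, (a ψ) ^ 2 ≤ (m : ℝ) * ((20 / 17) * (‖fres n‖ + ‖u‖) ^ 2) := by
          refine mul_le_mul_of_nonneg_left ?_ hm0'
          linarith [hz]
        nlinarith [h2, sq_nonneg (|(⟪fres n, g (n + 1)⟫ : ℝ)|), e3]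
      have hsqm : Real.sqrt m ^ 2 = (m : ℝ) := Real.sq_sqrt (by positivity)
      have hsqm0 : (0 : ℝ) ≤ Real.sqrt m := Real.sqrt_nonneg _
      have h4 : 0.92191 * (‖fres n‖ * (‖fres n‖ - ‖u‖)) ≤
          Real.sqrt m * |(⟪fres n, g (n + 1)⟫ : ℝ)| * (‖fres n‖ + ‖u‖) := by
        apply oga_le_of_sq_le_sq (by positivity)
        have e4 : (Real.sqrt m * |(⟪fres n, g (n + 1)⟫ : ℝ)| * (‖fres n‖ + ‖u‖)) ^ 2
            = (m : ℝ) * |(⟪fres n, g (n + 1)⟫ : ℝ)| ^ 2 * (‖fres n‖ + ‖u‖) ^ 2 := by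
          rw [mul_pow, mul_pow, hsqm]
        rw [e4]
        nlinarith [h3]
      have hA : 0.92191 * (‖fres n‖ * (‖fres n‖ - ‖u‖)) - 0.09394 * (‖fres n‖ + ‖u‖) ^ 2
          ≤ Real.sqrt m * |(⟪u, g (n + 1)⟫ : ℝ)| * (‖fres n‖ + ‖u‖) := by
        have e5 : Real.sqrt m * |(⟪fres n, g (n + 1)⟫ : ℝ)| * (‖fres n‖ + ‖u‖) ≤
            Real.sqrt m * (E + |(⟪u, g (n + 1)⟫ : ℝ)|) * (‖fres n‖ + ‖u‖) := by
          have : Real.sqrt m * |(⟪fres n, g (n + 1)⟫ : ℝ)| ≤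
              Real.sqrt m * (E + |(⟪u, g (n + 1)⟫ : ℝ)|) :=
            mul_le_mul_of_nonneg_left hGEw hsqm0
          exact mul_le_mul_of_nonneg_right this (le_of_lt hxδ0)
        have e6 : Real.sqrt m * E * (‖fres n‖ + ‖u‖) ≤
            (0.09394 * (‖fres n‖ + ‖u‖)) * (‖fres n‖ + ‖u‖) :=
          mul_le_mul_of_nonneg_right hEs (le_of_lt hxδ0)
        nlinarith [h4, e5, e6]
      refine ⟨E, hE0, hEs, hcross2, hGEw, hA, ?_⟩
      have hpoly : 1.007 * ‖u‖ * (‖fres n‖ + ‖u‖) ≤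
          0.92191 * (‖fres n‖ * (‖fres n‖ - ‖u‖)) - 0.09394 * (‖fres n‖ + ‖u‖) ^ 2 := by
        nlinarith [hxn, hδ0, sq_nonneg (‖fres n‖ - 3 * ‖u‖), mul_nonneg hδ0 hδ0]
      have e7 : 1.007 * ‖u‖ * (‖fres n‖ + ‖u‖) ≤
          Real.sqrt m * |(⟪u, g (n + 1)⟫ : ℝ)| * (‖fres n‖ + ‖u‖) := le_trans hpoly hA
      have e8 : 1.007 * ‖u‖ ≤ Real.sqrt m * |(⟪u, g (n + 1)⟫ : ℝ)| :=
        le_of_mul_le_mul_right e7 hxδ0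
      have e9 : (1.007 * ‖u‖) ^ 2 ≤ (Real.sqrt m * |(⟪u, g (n + 1)⟫ : ℝ)|) ^ 2 :=
        pow_le_pow_left₀ (by positivity) e8 2
      have e10 : (Real.sqrt m * |(⟪u, g (n + 1)⟫ : ℝ)|) ^ 2
          = (m : ℝ) * (⟪u, g (n + 1)⟫ : ℝ) ^ 2 := by
        rw [mul_pow, hsqm, sq_abs]
      rw [← e10]
      have e11 : (1.007 * ‖u‖) ^ 2 = 1.014049 * ‖u‖ ^ 2 := by ring
      rw [e11] at e9
      have e12 : (0:ℝ) ≤ ‖u‖ ^ 2 := sq_nonneg _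
      clear * - e9 e12
      linarith
    obtain ⟨bade, hbadedef⟩ : ∃ b : Finset ℕ,
        b = (Finset.range (2 * m)).filter (fun n => g (n + 1) ∉ T) := ⟨_, rfl⟩
    have hbadeD : ∀ n ∈ bade, n < 2 * m ∧ g (n + 1) ∉ T := by
      intro n hn
      rw [hbadedef] at hn
      simpa [Finset.mem_filter, Finset.mem_range] using hn
    have hcardbade : m + (T \ Γ (2 * m)).card ≤ bade.card := by
      obtain ⟨good, hgooddef⟩ : ∃ b : Finset ℕ,
          b = (Finset.range (2 * m)).filter (fun n => g (n + 1) ∈ T) := ⟨_, rfl⟩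
      have hgb : good.card + bade.card = 2 * m := by
        rw [hgooddef, hbadedef]
        have := Finset.card_filter_add_card_filter_not
          (s := Finset.range (2 * m)) (p := fun n => g (n + 1) ∈ T)
        simpa [Finset.card_range] using this
      have himg : good.image (fun n => g (n + 1)) ⊆ T ∩ Γ (2 * m) := by
        intro ψ hψ
        simp only [Finset.mem_image] at hψ
        obtain ⟨n, hn, rfl⟩ := hψ
        rw [hgooddef, Finset.mem_filter, Finset.mem_range] at hn
        refine Finset.mem_inter.mpr ⟨hn.2, ?_⟩
        rw [hΓdef]
        exact Finset.mem_image_of_mem g (Finset.mem_Icc.mpr ⟨by omega, by omega⟩)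
      have hcardimg : (good.image (fun n => g (n + 1))).card = good.card := by
        refine Finset.card_image_of_injOn ?_
        intro n₁ hn₁ n₂ hn₂ heq
        have hn₁' := Finset.mem_coe.mp hn₁
        have hn₂' := Finset.mem_coe.mp hn₂
        rw [hgooddef, Finset.mem_filter, Finset.mem_range] at hn₁' hn₂'
        by_contra hne
        exact hinj n₁ hn₁'.1 n₂ hn₂'.1 hne heq
      have h1 : good.card ≤ (T ∩ Γ (2 * m)).card := by
        rw [← hcardimg]
        exact Finset.card_le_card himg
      have h2 : (T ∩ Γ (2 * m)).card + (T \ Γ (2 * m)).card = T.card :=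
        Finset.card_inter_add_card_sdiff T (Γ (2 * m))
      omega
    have himgbadeD : (↑(bade.image (fun n => g (n + 1))) : Set H) ⊆ D := by
      intro ψ hψ
      simp only [Finset.coe_image, Set.mem_image, Finset.mem_coe] at hψ
      obtain ⟨n, hn, rfl⟩ := hψ
      have := (hbadeD n hn).1
      exact hgD (n + 1) (by omega) (by omega)
    have hcardimgb : (bade.image (fun n => g (n + 1))).card = bade.card := by
      refine Finset.card_image_of_injOn ?_
      intro n₁ hn₁ n₂ hn₂ heq
      by_contra hne
      exact hinj n₁ (hbadeD n₁ (Finset.mem_coe.mp hn₁)).1 n₂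
        (hbadeD n₂ (Finset.mem_coe.mp hn₂)).1 hne heq
    have hbess : ∑ n ∈ bade, (⟪u, g (n + 1)⟫ : ℝ) ^ 2 ≤ (11 / 10) * ‖u‖ ^ 2 := by
      have h1 : ∑ n ∈ bade, (⟪u, g (n + 1)⟫ : ℝ) ^ 2
          = ∑ ψ ∈ bade.image (fun n => g (n + 1)), (⟪u, ψ⟫ : ℝ) ^ 2 := by
        rw [Finset.sum_image]
        intro n₁ hn₁ n₂ hn₂ heq
        by_contra hne
        exact hinj n₁ (hbadeD n₁ hn₁).1 n₂ (hbadeD n₂ hn₂).1 hne heq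
      have h2 := oga_bessel D M hM0 hDnorm hcoh (bade.image (fun n => g (n + 1))) himgbadeD u
      have h3 : (bade.card : ℝ) ≤ 2 * m := by
        have : bade.card ≤ 2 * m := by
          rw [hbadedef]
          exact le_trans (Finset.card_filter_le _ _) (by simp)
        exact_mod_cast this
      have h4 : ((bade.image (fun n => g (n + 1))).card : ℝ) * M ≤ 2 * m * M := by
        rw [hcardimgb]
        exact mul_le_mul_of_nonneg_right h3 hM0
      have h5 : 1 + ((bade.image (fun n => g (n + 1))).card : ℝ) * M ≤ 11 / 10 := by
        clear * - h4 hmM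
        linarith
      rw [h1]
      refine le_trans h2 ?_
      have h6 : (0 : ℝ) ≤ ‖u‖ ^ 2 := sq_nonneg _
      clear * - h5 h6
      nlinarith
    have hlow : (bade.card : ℝ) * (1.014 * ‖u‖ ^ 2) ≤
        (m : ℝ) * ∑ n ∈ bade, (⟪u, g (n + 1)⟫ : ℝ) ^ 2 := by
      have h1 : ∀ n ∈ bade, 1.014 * ‖u‖ ^ 2 ≤ (m : ℝ) * (⟪u, g (n + 1)⟫ : ℝ) ^ 2 := by
        intro n hn
        obtain ⟨hn1, hn2⟩ := hbadeD n hn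
        obtain ⟨E, _, _, _, _, _, hB⟩ := hbad n hn1 hn2
        exact hB
      have h2 := Finset.card_nsmul_le_sum bade
        (fun n => (m : ℝ) * (⟪u, g (n + 1)⟫ : ℝ) ^ 2) (1.014 * ‖u‖ ^ 2) h1
      rw [nsmul_eq_mul] at h2
      rw [← Finset.mul_sum] at h2
      exact h2
    have hδpos : 0 < ‖u‖ := by
      rcases eq_or_lt_of_le hδ0 with h | h
      · exfalso
        have hbne : bade.Nonempty := Finset.card_pos.mp (by omega)
        obtain ⟨n₀, hn₀⟩ := hbne
        obtain ⟨hn₀1, hn₀2⟩ := hbadeD n₀ hn₀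
        obtain ⟨E, hE0, hEs, _, _, hA, _⟩ := hbad n₀ hn₀1 hn₀2
        have h1 : (⟪u, g (n₀ + 1)⟫ : ℝ) ^ 2 ≤ ∑ n ∈ bade, (⟪u, g (n + 1)⟫ : ℝ) ^ 2 :=
          Finset.single_le_sum (f := fun n => (⟪u, g (n + 1)⟫ : ℝ) ^ 2)
            (fun i _ => sq_nonneg _) hn₀
        have h2 : (⟪u, g (n₀ + 1)⟫ : ℝ) ^ 2 ≤ 0 := by
          rw [← h] at hbess
          clear * - h1 hbess
          nlinarith
        have h3 : (⟪u, g (n₀ + 1)⟫ : ℝ) = 0 := by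
          have := sq_nonneg (⟪u, g (n₀ + 1)⟫ : ℝ)
          have h4 : (⟪u, g (n₀ + 1)⟫ : ℝ) ^ 2 = 0 := le_antisymm h2 this
          exact pow_eq_zero_iff (by norm_num) |>.mp h4
        rw [h3, abs_zero, ← h] at hA
        have hx0 := hx3 n₀ (le_of_lt hn₀1)
        rw [← h] at hx0
        clear * - hA hx0
        nlinarith
      · exact h
    have hρ : ((T \ Γ (2 * m)).card : ℝ) ≤ 0.0849 * m := by
      have hc1 : (m : ℝ) + ((T \ Γ (2 * m)).card : ℝ) ≤ (bade.card : ℝ) := by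
        exact_mod_cast hcardbade
      have h2 : (bade.card : ℝ) * (1.014 * ‖u‖ ^ 2) ≤ (m : ℝ) * ((11 / 10) * ‖u‖ ^ 2) := by
        refine le_trans hlow ?_
        exact mul_le_mul_of_nonneg_left hbess (by positivity)
      have h3 : 0 < ‖u‖ ^ 2 := by positivity
      clear * - hc1 h2 h3
      nlinarith
    have hbne : bade.Nonempty := Finset.card_pos.mp (by omega)
    obtain ⟨nh, hnhbade, hnhmin⟩ :=
      Finset.exists_min_image bade (fun n => (⟪u, g (n + 1)⟫ : ℝ) ^ 2) hbne
    obtain ⟨hnh2m, hnhT⟩ := hbadeD nh hnhbade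
    have hw2 : (m : ℝ) * (⟪u, g (nh + 1)⟫ : ℝ) ^ 2 ≤ (11 / 10) * ‖u‖ ^ 2 := by
      have h1 := Finset.card_nsmul_le_sum bade
        (fun n => (⟪u, g (n + 1)⟫ : ℝ) ^ 2) ((⟪u, g (nh + 1)⟫ : ℝ) ^ 2) hnhmin
      rw [nsmul_eq_mul] at h1
      have h2 : (m : ℝ) ≤ (bade.card : ℝ) := by
        have : m ≤ bade.card := by omega
        exact_mod_cast this
      have h3 := sq_nonneg (⟪u, g (nh + 1)⟫ : ℝ)
      clear * - h1 h2 h3 hbess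
      nlinarith
    have hsqm : Real.sqrt m ^ 2 = (m : ℝ) := Real.sq_sqrt (by positivity)
    have hws : Real.sqrt m * |(⟪u, g (nh + 1)⟫ : ℝ)| ≤ 1.0489 * ‖u‖ := by
      apply oga_le_of_sq_le_sq (by positivity)
      have e1 : (Real.sqrt m * |(⟪u, g (nh + 1)⟫ : ℝ)|) ^ 2
          = (m : ℝ) * (⟪u, g (nh + 1)⟫ : ℝ) ^ 2 := by
        rw [mul_pow, hsqm, sq_abs]
      rw [e1]
      have h3 := sq_nonneg ‖u‖
      clear * - hw2 h3
      nlinarith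
    obtain ⟨E, hE0, hEs, hcross2, hGEw, hA, hB⟩ := hbad nh hnh2m hnhT
    have hxh : ‖fres nh‖ ≤ 3.06 * ‖u‖ := by
      by_contra hcon
      push_neg at hcon
      have h1 : Real.sqrt m * |(⟪u, g (nh + 1)⟫ : ℝ)| * (‖fres nh‖ + ‖u‖)
          ≤ 1.0489 * ‖u‖ * (‖fres nh‖ + ‖u‖) :=
        mul_le_mul_of_nonneg_right hws (by positivity)
      clear * - h1 hA hcon hδpos
      nlinarith
    obtain ⟨κ, hκdef⟩ : ∃ κ : ℝ, κ = |(⟪u, g (nh + 1)⟫ : ℝ)| + 2 * E := ⟨_, rfl⟩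
    have hκ0 : 0 ≤ κ := by rw [hκdef]; positivity
    have hEs2 : Real.sqrt m * E ≤ 0.3814 * ‖u‖ := by
      refine le_trans hEs ?_
      clear * - hxh hδpos
      nlinarith
    have hκs : Real.sqrt m * κ ≤ 1.8117 * ‖u‖ := by
      rw [hκdef, mul_add]
      clear * - hws hEs2
      nlinarith
    have hRsub : T \ Γ (2 * m) ⊆ T \ Γ nh :=
      Finset.sdiff_subset_sdiff (Finset.Subset.refl T) (hΓmono nh (2 * m) (le_of_lt hnh2m))
    have haψ : ∀ ψ ∈ T \ Γ (2 * m), |a ψ| ≤ κ + |(⟪u, ψ⟫ : ℝ)| := by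
      intro ψ hψ
      obtain ⟨hψT, hψΓ⟩ := Finset.mem_sdiff.mp (hRsub hψ)
      have h1 := hcross2 ψ hψT hψΓ
      have h2 : |(⟪fres nh, ψ⟫ : ℝ)| ≤ |(⟪fres nh, g (nh + 1)⟫ : ℝ)| :=
        hgreedy nh hnh2m ψ (hTD (Finset.mem_coe.mpr hψT))
      have h8 : |(⟪fres nh, ψ⟫ : ℝ)| ≤ E + |(⟪u, g (nh + 1)⟫ : ℝ)| := le_trans h2 hGEw
      have h4 := abs_le.mp h1
      have h9 := abs_le.mp h8
      have h5 := le_abs_self (⟪u, ψ⟫ : ℝ)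
      have h6 := neg_abs_le (⟪u, ψ⟫ : ℝ)
      rw [hκdef, abs_le]
      constructor
      · clear * - h4 h9 h5 h6; linarith
      · clear * - h4 h9 h5 h6; linarith
    have hU2 : ∑ ψ ∈ T \ Γ (2 * m), (⟪u, ψ⟫ : ℝ) ^ 2 ≤ (21 / 20) * ‖u‖ ^ 2 := by
      have hsub : (↑(T \ Γ (2 * m)) : Set H) ⊆ D := by
        intro ψ hψ
        have := Finset.mem_coe.mp hψ
        exact hTD (Finset.mem_coe.mpr (Finset.mem_sdiff.mp this).1)
      have h1 := oga_bessel D M hM0 hDnorm hcoh (T \ Γ (2 * m)) hsub u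
      have h2 : ((T \ Γ (2 * m)).card : ℝ) * M ≤ 1 / 20 := by
        have h3 : ((T \ Γ (2 * m)).card : ℝ) ≤ (m : ℝ) := by
          have : (T \ Γ (2 * m)).card ≤ m :=
            le_trans (Finset.card_le_card Finset.sdiff_subset) hTcard
          exact_mod_cast this
        clear * - h3 hM0 hmM
        nlinarith
      refine le_trans h1 ?_
      have h6 : (0 : ℝ) ≤ ‖u‖ ^ 2 := sq_nonneg _
      clear * - h2 h6
      nlinarith
    have hsumu : (∑ ψ ∈ T \ Γ (2 * m), |(⟪u, ψ⟫ : ℝ)|) ^ 2 ≤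
        ((T \ Γ (2 * m)).card : ℝ) * ∑ ψ ∈ T \ Γ (2 * m), (⟪u, ψ⟫ : ℝ) ^ 2 :=
      oga_sq_sum_le _ (fun ψ => (⟪u, ψ⟫ : ℝ))
    have hz2 : ∑ ψ ∈ T \ Γ (2 * m), (a ψ) ^ 2 ≤
        ((T \ Γ (2 * m)).card : ℝ) * κ ^ 2
          + 2 * κ * (∑ ψ ∈ T \ Γ (2 * m), |(⟪u, ψ⟫ : ℝ)|)
          + ∑ ψ ∈ T \ Γ (2 * m), (⟪u, ψ⟫ : ℝ) ^ 2 := by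
      have h1 : ∑ ψ ∈ T \ Γ (2 * m), (a ψ) ^ 2 ≤
          ∑ ψ ∈ T \ Γ (2 * m), (κ + |(⟪u, ψ⟫ : ℝ)|) ^ 2 := by
        refine Finset.sum_le_sum fun ψ hψ => ?_
        rw [← sq_abs (a ψ)]
        exact pow_le_pow_left₀ (abs_nonneg _) (haψ ψ hψ) 2
      refine le_trans h1 ?_
      have h2 : ∀ ψ ∈ T \ Γ (2 * m), (κ + |(⟪u, ψ⟫ : ℝ)|) ^ 2
          = κ ^ 2 + 2 * κ * |(⟪u, ψ⟫ : ℝ)| + (⟪u, ψ⟫ : ℝ) ^ 2 := by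
        intro ψ _
        rw [← sq_abs (⟪u, ψ⟫ : ℝ)]
        ring
      rw [Finset.sum_congr rfl h2, Finset.sum_add_distrib, Finset.sum_add_distrib,
        Finset.sum_const, nsmul_eq_mul, ← Finset.mul_sum]
    have hm1 : (1 : ℝ) ≤ (m : ℝ) := by exact_mod_cast hm
    have hκm : (m : ℝ) * κ ^ 2 ≤ (1.8117 * ‖u‖) ^ 2 := by
      have h1 : (Real.sqrt m * κ) ^ 2 ≤ (1.8117 * ‖u‖) ^ 2 :=
        pow_le_pow_left₀ (by positivity) hκs 2
      rw [mul_pow, hsqm] at h1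
      exact h1
    have hρκ : ((T \ Γ (2 * m)).card : ℝ) * κ ^ 2 ≤ 0.2787 * ‖u‖ ^ 2 := by
      have h1 : ((T \ Γ (2 * m)).card : ℝ) * κ ^ 2 ≤ (0.0849 * m) * κ ^ 2 :=
        mul_le_mul_of_nonneg_right hρ (sq_nonneg κ)
      have h2 := sq_nonneg κ
      have h3 := sq_nonneg ‖u‖
      clear * - h1 h2 h3 hκm
      nlinarith
    have hmid : κ * (∑ ψ ∈ T \ Γ (2 * m), |(⟪u, ψ⟫ : ℝ)|) ≤ 0.541 * ‖u‖ ^ 2 := by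
      apply oga_le_of_sq_le_sq (by positivity)
      have hsum0 : (0 : ℝ) ≤ ∑ ψ ∈ T \ Γ (2 * m), |(⟪u, ψ⟫ : ℝ)| :=
        Finset.sum_nonneg fun ψ _ => abs_nonneg _
      have hU20 : (0 : ℝ) ≤ ∑ ψ ∈ T \ Γ (2 * m), (⟪u, ψ⟫ : ℝ) ^ 2 :=
        Finset.sum_nonneg fun ψ _ => sq_nonneg _
      have h1 : (κ * (∑ ψ ∈ T \ Γ (2 * m), |(⟪u, ψ⟫ : ℝ)|)) ^ 2
          ≤ (((T \ Γ (2 * m)).card : ℝ) * κ ^ 2) * ∑ ψ ∈ T \ Γ (2 * m), (⟪u, ψ⟫ : ℝ) ^ 2 := by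
        have h2 : κ ^ 2 * (∑ ψ ∈ T \ Γ (2 * m), |(⟪u, ψ⟫ : ℝ)|) ^ 2
            ≤ κ ^ 2 * (((T \ Γ (2 * m)).card : ℝ) * ∑ ψ ∈ T \ Γ (2 * m), (⟪u, ψ⟫ : ℝ) ^ 2) :=
          mul_le_mul_of_nonneg_left hsumu (sq_nonneg κ)
        clear * - h2
        nlinarith
      have h3 := sq_nonneg ‖u‖
      have h4 : (((T \ Γ (2 * m)).card : ℝ)) * κ ^ 2 ≥ 0 := mul_nonneg (Nat.cast_nonneg _) (sq_nonneg κ)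
      clear * - h1 hρκ hU2 hU20 h3 h4
      nlinarith
    have hzf : ∑ ψ ∈ T \ Γ (2 * m), (a ψ) ^ 2 ≤ 2.411 * ‖u‖ ^ 2 := by
      have hU2' := hU2
      have h3 := sq_nonneg ‖u‖
      clear * - hz2 hρκ hmid hU2' h3
      linarith
    -- minimality of the residual over the selected span
    have hq : ‖fres (2 * m)‖ ≤ ‖u + ∑ ψ ∈ T \ Γ (2 * m), a ψ • ψ‖ := by
      have hsplit : (∑ ψ ∈ T \ Γ (2 * m), a ψ • ψ) + ∑ ψ ∈ T ∩ Γ (2 * m), a ψ • ψ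
          = ∑ ψ ∈ T, a ψ • ψ := by
        rw [← Finset.sdiff_inter_self_left T (Γ (2 * m))]
        exact Finset.sum_sdiff Finset.inter_subset_left
      have hqspan : ∑ ψ ∈ T ∩ Γ (2 * m), a ψ • ψ ∈
          Submodule.span ℝ (↑(Γ (2 * m)) : Set H) :=
        Submodule.sum_mem _ fun ψ hψ => Submodule.smul_mem _ _
          (Submodule.subset_span (Finset.mem_coe.mpr (Finset.mem_inter.mp hψ).2))
      have h1 : f - (∑ ψ ∈ T ∩ Γ (2 * m), a ψ • ψ)
          = u + ∑ ψ ∈ T \ Γ (2 * m), a ψ • ψ := by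
        conv_lhs => rw [hfA, ← hsplit]
        abel
      have h2 : (⟪fres (2 * m), f - ∑ ψ ∈ T ∩ Γ (2 * m), a ψ • ψ⟫ : ℝ)
          = ‖fres (2 * m)‖ ^ 2 := by
        have e1 : f - (∑ ψ ∈ T ∩ Γ (2 * m), a ψ • ψ)
            = fres (2 * m) + ((f - fres (2 * m)) - ∑ ψ ∈ T ∩ Γ (2 * m), a ψ • ψ) := by
          abel
        rw [e1, inner_add_right, real_inner_self_eq_norm_sq]
        have e2 : (⟪fres (2 * m), (f - fres (2 * m)) - ∑ ψ ∈ T ∩ Γ (2 * m), a ψ • ψ⟫ : ℝ) = 0 :=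
          horthΓ (2 * m) le_rfl _ (sub_mem (hspan (2 * m) le_rfl) hqspan)
        rw [e2]
        ring
      have h3 : ‖fres (2 * m)‖ ^ 2 ≤
          ‖fres (2 * m)‖ * ‖u + ∑ ψ ∈ T \ Γ (2 * m), a ψ • ψ‖ := by
        rw [← h2, h1]
        exact le_trans (le_abs_self _) (abs_real_inner_le_norm _ _)
      clear * - h3 hxf
      nlinarith
    have hnorm2 : ‖∑ ψ ∈ T \ Γ (2 * m), a ψ • ψ‖ ^ 2 ≤
        (21 / 20) * ∑ ψ ∈ T \ Γ (2 * m), (a ψ) ^ 2 := by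
      have hsub : (↑(T \ Γ (2 * m)) : Set H) ⊆ D := by
        intro ψ hψ
        exact hTD (Finset.mem_coe.mpr (Finset.mem_sdiff.mp (Finset.mem_coe.mp hψ)).1)
      have h1 := oga_gram_upper D M hM0 hDnorm hcoh (T \ Γ (2 * m)) hsub a
      have h2 : ((T \ Γ (2 * m)).card : ℝ) * M ≤ 1 / 20 := by
        have h3 : ((T \ Γ (2 * m)).card : ℝ) ≤ (m : ℝ) := by
          have : (T \ Γ (2 * m)).card ≤ m :=
            le_trans (Finset.card_le_card Finset.sdiff_subset) hTcard
          exact_mod_cast this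
        clear * - h3 hM0 hmM
        nlinarith
      have h4 : (0 : ℝ) ≤ ∑ ψ ∈ T \ Γ (2 * m), (a ψ) ^ 2 :=
        Finset.sum_nonneg fun ψ _ => sq_nonneg _
      refine le_trans h1 ?_
      clear * - h2 h4
      nlinarith
    have hns : ‖∑ ψ ∈ T \ Γ (2 * m), a ψ • ψ‖ ≤ 1.5912 * ‖u‖ := by
      apply oga_le_of_sq_le_sq (by positivity)
      have h3 := sq_nonneg ‖u‖
      clear * - hnorm2 hzf h3
      nlinarith
    have hfinal : ‖fres (2 * m)‖ ≤ 2.5912 * ‖u‖ := by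
      refine le_trans hq (le_trans (norm_add_le _ _) ?_)
      clear * - hns
      linarith
    clear * - hfinal hX hδpos
    linarith
end

section
/- Let v_0, v_1, …, v_{2m} be nonnegative reals (squared norms) and let T_1, T_2 partition {1,…,2m} with |T_1| ≤ m. Suppose v_n² ≤ v_{n−1}² + 0.3 D M for n ∈ T_1 and v_n² ≤ v_{n−1}² − 0.6 d_n² for n ∈ T_2, where D = Σ_{n∈T_2} d_n², and mM ≤ 1/20, v_0 ≤ 1.01 σ. Then D ≤ (1.01 σ)²/0.58, i.e. D^{1/2} ≤ 1.33 σ. -/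
/-- If `v₀,…,v_{2m} ≥ 0`, `T₁ ∪ T₂` partitions `{1,…,2m}` with `|T₁| ≤ m`,
`vₙ² ≤ v_{n-1}² + 0.3 D M` for `n ∈ T₁`, `vₙ² ≤ v_{n-1}² - 0.6 dₙ²` for `n ∈ T₂`
(where `D = ∑_{n∈T₂} dₙ²`), `mM ≤ 1/20` and `v₀ ≤ 1.01 σ`, then
`0.58 D ≤ (1.01 σ)²`, hence `√D ≤ 1.33 σ`. -/
theorem numeric_D_bound (m : ℕ) (M : ℝ) (hm : 1 ≤ m) (hM : 0 ≤ M)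
    (hmM : (m : ℝ) * M ≤ 1 / 20)
    (σ : ℝ) (hσ : 0 ≤ σ)
    (v : ℕ → ℝ) (hv : ∀ n ≤ 2 * m, 0 ≤ v n)
    (T₁ T₂ : Finset ℕ) (hunion : T₁ ∪ T₂ = Finset.Icc 1 (2 * m))
    (hdisj : Disjoint T₁ T₂) (hT₁ : T₁.card ≤ m)
    (d : ℕ → ℝ) (Dv : ℝ) (hD : Dv = ∑ n ∈ T₂, (d n) ^ 2)
    (hv0 : v 0 ≤ 1.01 * σ)
    (hrec₁ : ∀ n ∈ T₁, (v n) ^ 2 ≤ (v (n - 1)) ^ 2 + 0.3 * Dv * M)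
    (hrec₂ : ∀ n ∈ T₂, (v n) ^ 2 ≤ (v (n - 1)) ^ 2 - 0.6 * (d n) ^ 2) :
    0.58 * Dv ≤ (1.01 * σ) ^ 2 ∧ Real.sqrt Dv ≤ 1.33 * σ := by
  have hDnn : 0 ≤ Dv := by
    rw [hD]; exact Finset.sum_nonneg fun n _ => sq_nonneg _
  -- key telescoping estimate
  have key : ∀ k, k ≤ 2 * m →
      (v k) ^ 2 ≤ (v 0) ^ 2 + 0.3 * Dv * M * ((T₁ ∩ Finset.Icc 1 k).card : ℝ)
        - 0.6 * ∑ n ∈ T₂ ∩ Finset.Icc 1 k, (d n) ^ 2 := by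
    intro k hk
    induction k with
    | zero => simp
    | succ k ih =>
      have hk' : k ≤ 2 * m := Nat.le_of_succ_le hk
      have ih' := ih hk'
      have hmem : k + 1 ∈ T₁ ∪ T₂ := by
        rw [hunion]; exact Finset.mem_Icc.2 ⟨Nat.succ_le_succ (Nat.zero_le _), hk⟩
      have hIcc : Finset.Icc 1 (k + 1) = insert (k + 1) (Finset.Icc 1 k) := by
        ext x; simp [Finset.mem_Icc]; omega
      have hnotmem : k + 1 ∉ Finset.Icc 1 k := by simp
      rcases Finset.mem_union.1 hmem with h1 | h2
      · have hnot2 : k + 1 ∉ T₂ := fun h => (Finset.disjoint_left.1 hdisj h1) h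
        have e1 : T₁ ∩ Finset.Icc 1 (k + 1) = insert (k + 1) (T₁ ∩ Finset.Icc 1 k) := by
          rw [hIcc, Finset.inter_insert_of_mem h1]
        have e2 : T₂ ∩ Finset.Icc 1 (k + 1) = T₂ ∩ Finset.Icc 1 k := by
          rw [hIcc, Finset.inter_insert_of_notMem hnot2]
        have hcard : ((T₁ ∩ Finset.Icc 1 (k + 1)).card : ℝ)
            = ((T₁ ∩ Finset.Icc 1 k).card : ℝ) + 1 := by
          rw [e1, Finset.card_insert_of_notMem (fun h => hnotmem (Finset.mem_inter.1 h).2)]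
          push_cast; ring
        have hr := hrec₁ (k + 1) h1
        simp only [Nat.add_sub_cancel] at hr
        rw [hcard, e2]
        linarith
      · have hnot1 : k + 1 ∉ T₁ := fun h => (Finset.disjoint_left.1 hdisj h) h2
        have e1 : T₁ ∩ Finset.Icc 1 (k + 1) = T₁ ∩ Finset.Icc 1 k := by
          rw [hIcc, Finset.inter_insert_of_notMem hnot1]
        have e2 : T₂ ∩ Finset.Icc 1 (k + 1) = insert (k + 1) (T₂ ∩ Finset.Icc 1 k) := by
          rw [hIcc, Finset.inter_insert_of_mem h2]
        have hsum : ∑ n ∈ T₂ ∩ Finset.Icc 1 (k + 1), (d n) ^ 2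
            = (d (k + 1)) ^ 2 + ∑ n ∈ T₂ ∩ Finset.Icc 1 k, (d n) ^ 2 := by
          rw [e2, Finset.sum_insert (fun h => hnotmem (Finset.mem_inter.1 h).2)]
        have hr := hrec₂ (k + 1) h2
        simp only [Nat.add_sub_cancel] at hr
        rw [e1, hsum]
        linarith
  have hT₂sub : T₂ ⊆ Finset.Icc 1 (2 * m) := hunion ▸ Finset.subset_union_right
  have hT₁sub : T₁ ⊆ Finset.Icc 1 (2 * m) := hunion ▸ Finset.subset_union_left
  have hfin := key (2 * m) le_rfl
  have e1 : T₁ ∩ Finset.Icc 1 (2 * m) = T₁ := Finset.inter_eq_left.2 hT₁sub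
  have e2 : T₂ ∩ Finset.Icc 1 (2 * m) = T₂ := Finset.inter_eq_left.2 hT₂sub
  rw [e1, e2, ← hD] at hfin
  have hsq : 0 ≤ (v (2 * m)) ^ 2 := sq_nonneg _
  have hcard : ((T₁.card : ℝ)) ≤ (m : ℝ) := by exact_mod_cast hT₁
  have hv0sq : (v 0) ^ 2 ≤ (1.01 * σ) ^ 2 := by
    have h0 : 0 ≤ v 0 := hv 0 (Nat.zero_le _)
    nlinarith
  have hMm : 0.3 * Dv * M * ((T₁.card : ℝ)) ≤ 0.015 * Dv := by
    have h1 : 0.3 * Dv * M * ((T₁.card : ℝ)) ≤ 0.3 * Dv * M * (m : ℝ) := by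
      apply mul_le_mul_of_nonneg_left hcard
      positivity
    nlinarith
  have hmain : 0.58 * Dv ≤ (1.01 * σ) ^ 2 := by nlinarith
  refine ⟨hmain, ?_⟩
  have hle : Dv ≤ (1.33 * σ) ^ 2 := by nlinarith
  calc Real.sqrt Dv ≤ Real.sqrt ((1.33 * σ) ^ 2) := Real.sqrt_le_sqrt hle
    _ = 1.33 * σ := Real.sqrt_sq (by positivity)
end
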